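/- arXiv:math/9902146 — 2 statements merged into one kernel-verified Lean document; each statement's English description precedes it below -/
import Mathlib

section
/- Let a be a finite-dimensional Lie superalgebra, K ∈ a⊗a an even, symmetric, a-invariant element, ω an automorphism of a of finite order n, and ζ a primitive n-th root of unity. Suppose (ω⊗ω)(K) = ζ·K. Then the rational function r(u,v) = Σ_{m ∈ ℤ/n} (id⊗ω^m)(K)/(u − ζ^m v) is antisymmetric, i.e. r_{12}(u,v) + r_{21}(v,u) = 0, where r_{21}(v,u) is obtained by applying the super flip to r(v,u). -/
open Matrix

/- We model the finite-dimensional Lie superalgebra `a` as a ℤ₂-graded subspace `L` of a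
matrix superalgebra `Matrix ι ι ℂ` (with parity function `par` on the indices), closed
under the supercommutator — every finite-dimensional Lie superalgebra admits such a
faithful realization.  Elements of the super tensor square `a ⊗ a` are recorded by their
coefficient matrices: `Z p q` is the coefficient of `E_{p.1 q.1} ⊗ E_{p.2 q.2}`. -/

variable {ι : Type*}

/-- Multiplication in the super tensor square, on coefficient matrices. -/
noncomputable def sMul2 [Fintype ι] (par : ι → ℕ) (Z W : Matrix (ι × ι) (ι × ι) ℂ) :
    Matrix (ι × ι) (ι × ι) ℂ :=
  Matrix.of fun p q => ∑ k : ι, ∑ l : ι,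
    (-1 : ℂ) ^ ((par k + par q.1) * (par p.2 + par l)) * Z p (k, l) * W (k, l) q

/-- The super flip `X ⊗ Y ↦ Y ⊗ X · (-1)^{deg X · deg Y}` on coefficient matrices. -/
noncomputable def sFlip (par : ι → ℕ) (Z : Matrix (ι × ι) (ι × ι) ℂ) :
    Matrix (ι × ι) (ι × ι) ℂ :=
  Matrix.of fun p q =>
    (-1 : ℂ) ^ ((par p.1 + par q.1) * (par p.2 + par q.2)) * Z (p.2, p.1) (q.2, q.1)

/-- The odd part of an element of the super tensor square. -/
noncomputable def oddPart2 (par : ι → ℕ) (Z : Matrix (ι × ι) (ι × ι) ℂ) :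
    Matrix (ι × ι) (ι × ι) ℂ :=
  Matrix.of fun p q =>
    if (par p.1 + par p.2 + par q.1 + par q.2) % 2 = 1 then Z p q else 0

/-- The supercommutator in the super tensor square. -/
noncomputable def sbr2 [Fintype ι] (par : ι → ℕ) (Z W : Matrix (ι × ι) (ι × ι) ℂ) :
    Matrix (ι × ι) (ι × ι) ℂ :=
  sMul2 par Z W - sMul2 par W Z + (2 : ℂ) • sMul2 par (oddPart2 par W) (oddPart2 par Z)

/-- The parity operator `ε` of the matrix superalgebra. -/
noncomputable def epsMat [DecidableEq ι] (par : ι → ℕ) : Matrix ι ι ℂ :=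
  Matrix.diagonal fun i => (-1 : ℂ) ^ par i

/-- The odd part of a matrix. -/
noncomputable def oddPart [Fintype ι] [DecidableEq ι] (par : ι → ℕ) (X : Matrix ι ι ℂ) :
    Matrix ι ι ℂ :=
  (2⁻¹ : ℂ) • (X - epsMat par * X * epsMat par)

/-- The supercommutator in the matrix superalgebra. -/
noncomputable def sbr [Fintype ι] [DecidableEq ι] (par : ι → ℕ) (X Y : Matrix ι ι ℂ) :
    Matrix ι ι ℂ :=
  X * Y - Y * X + (2 : ℂ) • (oddPart par Y * oddPart par X)

/-- The coefficient matrix of the pure tensor `X ⊗ Y`. -/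
noncomputable def tmat (X Y : Matrix ι ι ℂ) : Matrix (ι × ι) (ι × ι) ℂ :=
  Matrix.of fun p q => X p.1 q.1 * Y p.2 q.2

/-- `id ⊗ f` on coefficient matrices, for a linear operation `f` on the second factor. -/
noncomputable def idT (f : Matrix ι ι ℂ → Matrix ι ι ℂ) (Z : Matrix (ι × ι) (ι × ι) ℂ) :
    Matrix (ι × ι) (ι × ι) ℂ :=
  Matrix.of fun p q => f (Matrix.of fun j l => Z (p.1, j) (q.1, l)) p.2 q.2

/-- `f ⊗ id` on coefficient matrices. -/
noncomputable def tId (f : Matrix ι ι ℂ → Matrix ι ι ℂ) (Z : Matrix (ι × ι) (ι × ι) ℂ) :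
    Matrix (ι × ι) (ι × ι) ℂ :=
  Matrix.of fun p q => f (Matrix.of fun i k => Z (i, p.2) (k, q.2)) p.1 q.1

/-- `r(u,v) = Σ_{m ∈ ℤ/n} (id ⊗ ω^m)(K) / (u - ζ^m v)`. -/
noncomputable def rFun [Fintype ι] (n : ℕ) (ζ : ℂ) (ω : Matrix ι ι ℂ → Matrix ι ι ℂ)
    (K : Matrix (ι × ι) (ι × ι) ℂ) (u v : ℂ) : Matrix (ι × ι) (ι × ι) ℂ :=
  ∑ m ∈ Finset.range n, (u - ζ ^ m * v)⁻¹ • idT (ω^[m]) K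


namespace RAntiAux

variable {ι : Type*}

/-! Basic algebraic lemmas for `idT`, `tId`, `sFlip`, `tmat`. -/

lemma idT_id (Z : Matrix (ι × ι) (ι × ι) ℂ) : idT id Z = Z := rfl

lemma tId_id (Z : Matrix (ι × ι) (ι × ι) ℂ) : tId id Z = Z := rfl

lemma idT_comp (f g : Matrix ι ι ℂ → Matrix ι ι ℂ) (Z : Matrix (ι × ι) (ι × ι) ℂ) :
    idT f (idT g Z) = idT (f ∘ g) Z := rfl

lemma tId_comp (f g : Matrix ι ι ℂ → Matrix ι ι ℂ) (Z : Matrix (ι × ι) (ι × ι) ℂ) :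
    tId f (tId g Z) = tId (f ∘ g) Z := rfl

lemma f_zero (f : Matrix ι ι ℂ → Matrix ι ι ℂ)
    (hfs : ∀ (c : ℂ) (A : Matrix ι ι ℂ), f (c • A) = c • f A) : f 0 = 0 := by
  simpa using hfs 0 0

lemma idT_zero (f : Matrix ι ι ℂ → Matrix ι ι ℂ)
    (hfs : ∀ (c : ℂ) (A : Matrix ι ι ℂ), f (c • A) = c • f A) :
    idT f (0 : Matrix (ι × ι) (ι × ι) ℂ) = 0 := by
  ext p q
  show f (Matrix.of fun j l => (0 : Matrix (ι × ι) (ι × ι) ℂ) (p.1, j) (q.1, l)) p.2 q.2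
      = (0 : Matrix (ι × ι) (ι × ι) ℂ) p q
  have h0 : (Matrix.of fun j l => (0 : Matrix (ι × ι) (ι × ι) ℂ) (p.1, j) (q.1, l))
      = (0 : Matrix ι ι ℂ) := rfl
  rw [h0, f_zero f hfs]
  rfl

lemma idT_add (f : Matrix ι ι ℂ → Matrix ι ι ℂ)
    (hfa : ∀ A B : Matrix ι ι ℂ, f (A + B) = f A + f B)
    (Z W : Matrix (ι × ι) (ι × ι) ℂ) : idT f (Z + W) = idT f Z + idT f W := by
  ext p q
  show f (Matrix.of fun j l => (Z + W) (p.1, j) (q.1, l)) p.2 q.2 = _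
  have h0 : (Matrix.of fun j l => (Z + W) (p.1, j) (q.1, l))
      = (Matrix.of fun j l => Z (p.1, j) (q.1, l)) + (Matrix.of fun j l => W (p.1, j) (q.1, l)) := rfl
  rw [h0, hfa]
  rfl

lemma idT_smul (f : Matrix ι ι ℂ → Matrix ι ι ℂ)
    (hfs : ∀ (c : ℂ) (A : Matrix ι ι ℂ), f (c • A) = c • f A)
    (c : ℂ) (Z : Matrix (ι × ι) (ι × ι) ℂ) : idT f (c • Z) = c • idT f Z := by
  ext p q
  show f (Matrix.of fun j l => (c • Z) (p.1, j) (q.1, l)) p.2 q.2 = _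
  have h0 : (Matrix.of fun j l => (c • Z) (p.1, j) (q.1, l))
      = c • (Matrix.of fun j l => Z (p.1, j) (q.1, l)) := rfl
  rw [h0, hfs]
  rfl

lemma tId_zero (f : Matrix ι ι ℂ → Matrix ι ι ℂ)
    (hfs : ∀ (c : ℂ) (A : Matrix ι ι ℂ), f (c • A) = c • f A) :
    tId f (0 : Matrix (ι × ι) (ι × ι) ℂ) = 0 := by
  ext p q
  show f (Matrix.of fun i k => (0 : Matrix (ι × ι) (ι × ι) ℂ) (i, p.2) (k, q.2)) p.1 q.1
      = (0 : Matrix (ι × ι) (ι × ι) ℂ) p q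
  have h0 : (Matrix.of fun i k => (0 : Matrix (ι × ι) (ι × ι) ℂ) (i, p.2) (k, q.2))
      = (0 : Matrix ι ι ℂ) := rfl
  rw [h0, f_zero f hfs]
  rfl

lemma tId_add (f : Matrix ι ι ℂ → Matrix ι ι ℂ)
    (hfa : ∀ A B : Matrix ι ι ℂ, f (A + B) = f A + f B)
    (Z W : Matrix (ι × ι) (ι × ι) ℂ) : tId f (Z + W) = tId f Z + tId f W := by
  ext p q
  show f (Matrix.of fun i k => (Z + W) (i, p.2) (k, q.2)) p.1 q.1 = _
  have h0 : (Matrix.of fun i k => (Z + W) (i, p.2) (k, q.2))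
      = (Matrix.of fun i k => Z (i, p.2) (k, q.2)) + (Matrix.of fun i k => W (i, p.2) (k, q.2)) := rfl
  rw [h0, hfa]
  rfl

lemma tId_smul (f : Matrix ι ι ℂ → Matrix ι ι ℂ)
    (hfs : ∀ (c : ℂ) (A : Matrix ι ι ℂ), f (c • A) = c • f A)
    (c : ℂ) (Z : Matrix (ι × ι) (ι × ι) ℂ) : tId f (c • Z) = c • tId f Z := by
  ext p q
  show f (Matrix.of fun i k => (c • Z) (i, p.2) (k, q.2)) p.1 q.1 = _
  have h0 : (Matrix.of fun i k => (c • Z) (i, p.2) (k, q.2))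
      = c • (Matrix.of fun i k => Z (i, p.2) (k, q.2)) := rfl
  rw [h0, hfs]
  rfl

lemma sFlip_zero (par : ι → ℕ) : sFlip par (0 : Matrix (ι × ι) (ι × ι) ℂ) = 0 := by
  ext p q; simp [sFlip]

lemma sFlip_add (par : ι → ℕ) (Z W : Matrix (ι × ι) (ι × ι) ℂ) :
    sFlip par (Z + W) = sFlip par Z + sFlip par W := by
  ext p q; simp [sFlip]; ring

lemma sFlip_smul (par : ι → ℕ) (c : ℂ) (Z : Matrix (ι × ι) (ι × ι) ℂ) :
    sFlip par (c • Z) = c • sFlip par Z := by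
  ext p q; simp [sFlip]; ring

lemma sFlip_sum (par : ι → ℕ) {α : Type*} (s : Finset α)
    (g : α → Matrix (ι × ι) (ι × ι) ℂ) :
    sFlip par (∑ i ∈ s, g i) = ∑ i ∈ s, sFlip par (g i) := by
  ext p q
  simp [sFlip, Matrix.sum_apply, Finset.mul_sum]

lemma idT_tmat (f : Matrix ι ι ℂ → Matrix ι ι ℂ)
    (hfs : ∀ (c : ℂ) (A : Matrix ι ι ℂ), f (c • A) = c • f A)
    (X Y : Matrix ι ι ℂ) : idT f (tmat X Y) = tmat X (f Y) := by
  ext p q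
  show f (Matrix.of fun j l => tmat X Y (p.1, j) (q.1, l)) p.2 q.2 = tmat X (f Y) p q
  have h0 : (Matrix.of fun j l => tmat X Y (p.1, j) (q.1, l)) = X p.1 q.1 • Y := by
    ext j l; simp [tmat]
  rw [h0, hfs]
  simp [tmat]

lemma tId_tmat (f : Matrix ι ι ℂ → Matrix ι ι ℂ)
    (hfs : ∀ (c : ℂ) (A : Matrix ι ι ℂ), f (c • A) = c • f A)
    (X Y : Matrix ι ι ℂ) : tId f (tmat X Y) = tmat (f X) Y := by
  ext p q
  show f (Matrix.of fun i k => tmat X Y (i, p.2) (k, q.2)) p.1 q.1 = tmat (f X) Y p q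
  have h0 : (Matrix.of fun i k => tmat X Y (i, p.2) (k, q.2)) = Y p.2 q.2 • X := by
    ext i k; simp [tmat]; ring
  rw [h0, hfs]
  simp [tmat]
  ring

lemma tmat_add_left (X X' Y : Matrix ι ι ℂ) :
    tmat (X + X') Y = tmat X Y + tmat X' Y := by
  ext p q; simp [tmat]; ring

lemma tmat_add_right (X Y Y' : Matrix ι ι ℂ) :
    tmat X (Y + Y') = tmat X Y + tmat X Y' := by
  ext p q; simp [tmat]; ring

/-! Parity / homogeneity. -/

/-- Entrywise homogeneity of parity `a`. -/
def Homog (par : ι → ℕ) (a : ℕ) (X : Matrix ι ι ℂ) : Prop :=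
  ∀ p q, (par p + par q) % 2 ≠ a % 2 → X p q = 0

lemma epsConj_apply [Fintype ι] [DecidableEq ι] (par : ι → ℕ) (X : Matrix ι ι ℂ) (p q : ι) :
    (epsMat par * X * epsMat par) p q = (-1 : ℂ) ^ (par p + par q) * X p q := by
  simp [epsMat, Matrix.mul_diagonal, Matrix.diagonal_mul, pow_add]
  ring

lemma homog_even [Fintype ι] [DecidableEq ι] (par : ι → ℕ) (X : Matrix ι ι ℂ) :
    Homog par 0 ((2⁻¹ : ℂ) • (X + epsMat par * X * epsMat par)) := by
  intro p q h
  have hodd : (par p + par q) % 2 = 1 := by omega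
  have : (-1 : ℂ) ^ (par p + par q) = -1 := Odd.neg_one_pow (Nat.odd_iff.2 hodd)
  simp [Matrix.smul_apply, Matrix.add_apply, epsConj_apply, this]

lemma homog_odd [Fintype ι] [DecidableEq ι] (par : ι → ℕ) (X : Matrix ι ι ℂ) :
    Homog par 1 ((2⁻¹ : ℂ) • (X - epsMat par * X * epsMat par)) := by
  intro p q h
  have heven : (par p + par q) % 2 = 0 := by omega
  have : (-1 : ℂ) ^ (par p + par q) = 1 := Even.neg_one_pow (Nat.even_iff.2 heven)
  simp [Matrix.smul_apply, Matrix.sub_apply, epsConj_apply, this]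

lemma sFlip_tmat_homog (par : ι → ℕ) (a b : ℕ) (X Y : Matrix ι ι ℂ)
    (hX : Homog par a X) (hY : Homog par b Y) :
    sFlip par (tmat X Y) = ((-1 : ℂ) ^ (a * b)) • tmat Y X := by
  ext p q
  simp only [sFlip, tmat, Matrix.of_apply, Matrix.smul_apply, smul_eq_mul]
  by_cases hx : X p.2 q.2 = 0
  · simp [hx]
  by_cases hy : Y p.1 q.1 = 0
  · simp [hy]
  have ha : (par p.2 + par q.2) % 2 = a % 2 := by
    by_contra h; exact hx (hX _ _ h)
  have hb : (par p.1 + par q.1) % 2 = b % 2 := by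
    by_contra h; exact hy (hY _ _ h)
  have hsgn : (-1 : ℂ) ^ ((par p.1 + par q.1) * (par p.2 + par q.2)) = (-1 : ℂ) ^ (a * b) := by
    rw [neg_one_pow_eq_pow_mod_two, neg_one_pow_eq_pow_mod_two (n := a * b),
      Nat.mul_mod, hb, ha, Nat.mul_mod a b, Nat.mul_comm (a % 2) (b % 2)]
  rw [hsgn]
  ring


/-- The odd/even decomposition step: subtraction commutes with additive `f`. -/
lemma f_sub (f : Matrix ι ι ℂ → Matrix ι ι ℂ)
    (hfa : ∀ A B : Matrix ι ι ℂ, f (A + B) = f A + f B)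
    (A B : Matrix ι ι ℂ) : f (A - B) = f A - f B := by
  have h := hfa (A - B) B
  rw [sub_add_cancel] at h
  exact eq_sub_of_add_eq h.symm

/-- Key compatibility: the super flip intertwines `id ⊗ f` and `f ⊗ id` on pure tensors
of elements on which `f` preserves parity. -/
lemma flip_idT_tmat [Fintype ι] [DecidableEq ι] (par : ι → ℕ)
    (f : Matrix ι ι ℂ → Matrix ι ι ℂ)
    (hfa : ∀ A B : Matrix ι ι ℂ, f (A + B) = f A + f B)
    (hfs : ∀ (c : ℂ) (A : Matrix ι ι ℂ), f (c • A) = c • f A)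
    (X Y : Matrix ι ι ℂ)
    (hfY : f (epsMat par * Y * epsMat par) = epsMat par * f Y * epsMat par) :
    sFlip par (idT f (tmat X Y)) = tId f (sFlip par (tmat X Y)) := by
  have hXd : X = (2⁻¹ : ℂ) • (X + epsMat par * X * epsMat par)
      + (2⁻¹ : ℂ) • (X - epsMat par * X * epsMat par) := by
    ext i j
    simp [Matrix.smul_apply, Matrix.add_apply, Matrix.sub_apply]
    ring
  have hYd : Y = (2⁻¹ : ℂ) • (Y + epsMat par * Y * epsMat par)
      + (2⁻¹ : ℂ) • (Y - epsMat par * Y * epsMat par) := by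
    ext i j
    simp [Matrix.smul_apply, Matrix.add_apply, Matrix.sub_apply]
    ring
  have h1 := homog_even par X
  have h2 := homog_odd par X
  have h3 := homog_even par Y
  have h4 := homog_odd par Y
  have h5 : Homog par 0 (f ((2⁻¹ : ℂ) • (Y + epsMat par * Y * epsMat par))) := by
    rw [hfs, hfa, hfY]
    exact homog_even par (f Y)
  have h6 : Homog par 1 (f ((2⁻¹ : ℂ) • (Y - epsMat par * Y * epsMat par))) := by
    rw [hfs, f_sub f hfa, hfY]
    exact homog_odd par (f Y)
  have key : ∀ (a b : ℕ) (X' Y' : Matrix ι ι ℂ), Homog par a X' → Homog par b Y' →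
      Homog par b (f Y') →
      sFlip par (idT f (tmat X' Y')) = tId f (sFlip par (tmat X' Y')) := by
    intro a b X' Y' hX' hY' hfY'
    rw [idT_tmat f hfs, sFlip_tmat_homog par a b _ _ hX' hfY',
      sFlip_tmat_homog par a b _ _ hX' hY', tId_smul f hfs, tId_tmat f hfs]
  conv_lhs => rw [hXd, hYd]
  conv_rhs => rw [hXd, hYd]
  simp only [tmat_add_left, tmat_add_right, idT_add f hfa, sFlip_add, tId_add f hfa]
  rw [key 0 0 _ _ h1 h3 h5, key 0 1 _ _ h1 h4 h6, key 1 0 _ _ h2 h3 h5,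
    key 1 1 _ _ h2 h4 h6]

end RAntiAux

open RAntiAux

/-- Antisymmetry of the twisted rational function:
`r₁₂(u,v) + r₂₁(v,u) = 0`, where `r₂₁(v,u)` is the super flip of `r(v,u)`. -/
theorem rFun_antisymmetric [Fintype ι] [DecidableEq ι] (par : ι → ℕ)
    (L : Submodule ℂ (Matrix ι ι ℂ))
    -- `L` is a graded subspace, closed under the supercommutator (a Lie superalgebra)
    (hL_graded : ∀ X ∈ L, epsMat par * X * epsMat par ∈ L)
    (hL_lie : ∀ X ∈ L, ∀ Y ∈ L, sbr par X Y ∈ L)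
    (K : Matrix (ι × ι) (ι × ι) ℂ)
    -- `K ∈ a ⊗ a`
    (hK_mem : K ∈ Submodule.span ℂ {Z | ∃ X ∈ L, ∃ Y ∈ L, Z = tmat X Y})
    -- `K` is even
    (hK_even : ∀ p q : ι × ι, (par p.1 + par p.2 + par q.1 + par q.2) % 2 = 1 → K p q = 0)
    -- `K` is symmetric: `K₁₂ = K₂₁`
    (hK_sym : sFlip par K = K)
    -- `K` is `a`-invariant: `[X⊗1 + 1⊗X, K] = 0` for all `X ∈ a`
    (hK_inv : ∀ X ∈ L, sbr2 par (tmat X 1 + tmat 1 X) K = 0)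
    (n : ℕ) (hn : 0 < n)
    -- `ω` is an automorphism of the Lie superalgebra `a` of order `n`
    (ω : Matrix ι ι ℂ →ₗ[ℂ] Matrix ι ι ℂ)
    (hω_mem : ∀ X ∈ L, ω X ∈ L)
    (hω_bij : ∀ Y ∈ L, ∃ X ∈ L, ω X = Y)
    (hω_lie : ∀ X ∈ L, ∀ Y ∈ L, ω (sbr par X Y) = sbr par (ω X) (ω Y))
    (hω_par : ∀ X ∈ L, ω (epsMat par * X * epsMat par) = epsMat par * ω X * epsMat par)
    (hω_ord : ∀ X ∈ L, (⇑ω)^[n] X = X)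
    -- `ζ` is a primitive `n`-th root of unity and `(ω⊗ω)(K) = ζ·K`
    (ζ : ℂ) (hζ : IsPrimitiveRoot ζ n)
    (hωK : idT (⇑ω) (tId (⇑ω) K) = ζ • K)
    (u v : ℂ) (hu : ∀ m < n, u ≠ ζ ^ m * v) (hv : ∀ m < n, v ≠ ζ ^ m * u) :
    rFun n ζ (⇑ω) K u v + sFlip par (rFun n ζ (⇑ω) K v u) = 0 := by
  classical
  have hζn : ζ ^ n = 1 := hζ.pow_eq_one
  -- linearity of the iterates of ω
  have hIa : ∀ (m : ℕ) (A B : Matrix ι ι ℂ),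
      (⇑ω)^[m] (A + B) = (⇑ω)^[m] A + (⇑ω)^[m] B := by
    intro m A B
    rw [← Module.End.pow_apply, ← Module.End.pow_apply, ← Module.End.pow_apply, map_add]
  have hIs : ∀ (m : ℕ) (c : ℂ) (A : Matrix ι ι ℂ),
      (⇑ω)^[m] (c • A) = c • (⇑ω)^[m] A := by
    intro m c A
    rw [← Module.End.pow_apply, ← Module.End.pow_apply]
    exact (ω ^ m).map_smul c A
  -- the iterates preserve L
  have hImem : ∀ (m : ℕ), ∀ X ∈ L, (⇑ω)^[m] X ∈ L := by
    intro m
    induction m with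
    | zero => intro X hX; simpa using hX
    | succ k ih =>
      intro X hX
      rw [Function.iterate_succ_apply]
      exact ih _ (hω_mem X hX)
  -- the iterates commute with the parity conjugation on L
  have hIeps : ∀ (m : ℕ), ∀ X ∈ L,
      (⇑ω)^[m] (epsMat par * X * epsMat par) = epsMat par * (⇑ω)^[m] X * epsMat par := by
    intro m
    induction m with
    | zero => intro X hX; simp
    | succ k ih =>
      intro X hX
      rw [Function.iterate_succ_apply, Function.iterate_succ_apply, hω_par X hX]
      exact ih _ (hω_mem X hX)
  -- the flip intertwines id⊗ω^m and ω^m⊗id on the span of pure tensors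
  have hflip : ∀ (m : ℕ), ∀ Z ∈ Submodule.span ℂ {Z | ∃ X ∈ L, ∃ Y ∈ L, Z = tmat X Y},
      sFlip par (idT ((⇑ω)^[m]) Z) = tId ((⇑ω)^[m]) (sFlip par Z) := by
    intro m Z hZ
    induction hZ using Submodule.span_induction with
    | mem W hW =>
      obtain ⟨X, hX, Y, hY, rfl⟩ := hW
      exact flip_idT_tmat par _ (hIa m) (hIs m) X Y (hIeps m Y hY)
    | zero => simp only [idT_zero _ (hIs m), sFlip_zero, tId_zero _ (hIs m)]
    | add x y hx hy ihx ihy =>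
      simp only [idT_add _ (hIa m), sFlip_add, tId_add _ (hIa m), ihx, ihy]
    | smul c x hx ihx =>
      simp only [idT_smul _ (hIs m), sFlip_smul, tId_smul _ (hIs m), ihx]
  -- id⊗ω^n acts as the identity on the span of pure tensors
  have hordZ : ∀ Z ∈ Submodule.span ℂ {Z | ∃ X ∈ L, ∃ Y ∈ L, Z = tmat X Y},
      idT ((⇑ω)^[n]) Z = Z := by
    intro Z hZ
    induction hZ using Submodule.span_induction with
    | mem W hW =>
      obtain ⟨X, hX, Y, hY, rfl⟩ := hW
      rw [idT_tmat _ (hIs n), hω_ord Y hY]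
    | zero => exact idT_zero _ (hIs n)
    | add x y hx hy ihx ihy => rw [idT_add _ (hIa n), ihx, ihy]
    | smul c x hx ihx => rw [idT_smul _ (hIs n), ihx]
  -- ω^a⊗id and id⊗ω^b commute on the span of pure tensors
  have hcomm : ∀ (a b : ℕ), ∀ Z ∈ Submodule.span ℂ {Z | ∃ X ∈ L, ∃ Y ∈ L, Z = tmat X Y},
      tId ((⇑ω)^[a]) (idT ((⇑ω)^[b]) Z) = idT ((⇑ω)^[b]) (tId ((⇑ω)^[a]) Z) := by
    intro a b Z hZ
    induction hZ using Submodule.span_induction with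
    | mem W hW =>
      obtain ⟨X, hX, Y, hY, rfl⟩ := hW
      rw [idT_tmat _ (hIs b), tId_tmat _ (hIs a), tId_tmat _ (hIs a), idT_tmat _ (hIs b)]
    | zero =>
      simp only [idT_zero _ (hIs b), tId_zero _ (hIs a)]
    | add x y hx hy ihx ihy =>
      simp only [idT_add _ (hIa b), tId_add _ (hIa a), ihx, ihy]
    | smul c x hx ihx =>
      simp only [idT_smul _ (hIs b), tId_smul _ (hIs a), ihx]
  -- ω⊗id preserves the span of pure tensors
  have hωa : ∀ A B : Matrix ι ι ℂ, ω (A + B) = ω A + ω B := fun A B => map_add ω A B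
  have hωs : ∀ (c : ℂ) (A : Matrix ι ι ℂ), ω (c • A) = c • ω A := fun c A => ω.map_smul c A
  have htIdmem : ∀ Z ∈ Submodule.span ℂ {Z | ∃ X ∈ L, ∃ Y ∈ L, Z = tmat X Y},
      tId (⇑ω) Z ∈ Submodule.span ℂ {Z | ∃ X ∈ L, ∃ Y ∈ L, Z = tmat X Y} := by
    intro Z hZ
    induction hZ using Submodule.span_induction with
    | mem W hW =>
      obtain ⟨X, hX, Y, hY, rfl⟩ := hW
      rw [tId_tmat _ hωs]
      exact Submodule.subset_span ⟨ω X, hω_mem X hX, Y, hY, rfl⟩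
    | zero =>
      rw [tId_zero _ hωs]
      exact Submodule.zero_mem _
    | add x y hx hy ihx ihy =>
      rw [tId_add _ hωa]
      exact Submodule.add_mem _ ihx ihy
    | smul c x hx ihx =>
      rw [tId_smul _ hωs]
      exact Submodule.smul_mem _ _ ihx
  -- Claim D : (ω⊗id) K = ζ • (id⊗ω^{n-1}) K
  have hD : tId (⇑ω) K = ζ • idT ((⇑ω)^[n - 1]) K := by
    have h1 := congrArg (idT ((⇑ω)^[n - 1])) hωK
    rw [idT_comp] at h1
    have h2 : (⇑ω)^[n - 1] ∘ (⇑ω) = (⇑ω)^[n] := by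
      rw [← Function.iterate_succ]
      have hsucc : (n - 1).succ = n := by omega
      rw [hsucc]
    rw [h2, hordZ _ (htIdmem K hK_mem), idT_smul _ (hIs (n - 1))] at h1
    exact h1
  -- (ω^m⊗id) K = ζ^m • (id⊗ω^{n-m}) K for m ≤ n
  have hKL : ∀ m, m ≤ n → tId ((⇑ω)^[m]) K = ζ ^ m • idT ((⇑ω)^[n - m]) K := by
    intro m
    induction m with
    | zero =>
      intro _
      simp only [Function.iterate_zero, pow_zero, one_smul, Nat.sub_zero]
      rw [tId_id, hordZ K hK_mem]
    | succ k ih =>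
      intro hk1
      have hk : k ≤ n := by omega
      have e1 : (⇑ω)^[k + 1] = (⇑ω)^[k] ∘ (⇑ω) := Function.iterate_succ (⇑ω) k
      rw [e1, ← tId_comp, hD, tId_smul _ (hIs k), hcomm k (n - 1) K hK_mem, ih hk,
        idT_smul _ (hIs (n - 1)), idT_comp]
      have e2 : (⇑ω)^[n - 1] ∘ (⇑ω)^[n - k] = (⇑ω)^[n - (k + 1)] ∘ (⇑ω)^[n] := by
        rw [← Function.iterate_add, ← Function.iterate_add,
          show n - 1 + (n - k) = n - (k + 1) + n by omega]
      rw [e2, ← idT_comp, hordZ K hK_mem, smul_smul, ← pow_succ']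
  -- the flip of (id⊗ω^m) K
  have hSym : ∀ m, m ≤ n →
      sFlip par (idT ((⇑ω)^[m]) K) = ζ ^ m • idT ((⇑ω)^[n - m]) K := by
    intro m hm
    rw [hflip m K hK_mem, hK_sym]
    exact hKL m hm
  -- the terms of the flipped sum
  have hterm : ∀ m ∈ Finset.range n,
      sFlip par ((v - ζ ^ m * u)⁻¹ • idT ((⇑ω)^[m]) K)
        = (-(u - ζ ^ ((n - m) % n) * v)⁻¹) • idT ((⇑ω)^[(n - m) % n]) K := by
    intro m hm
    rw [Finset.mem_range] at hm
    rw [sFlip_smul, hSym m (le_of_lt hm), smul_smul]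
    rcases Nat.eq_zero_or_pos m with h0 | hpos
    · subst h0
      simp only [Nat.sub_zero, Nat.mod_self, pow_zero, mul_one, one_mul,
        Function.iterate_zero, idT_id]
      rw [hordZ K hK_mem]
      congr 1
      rw [← inv_neg, neg_sub]
    · have hmod : (n - m) % n = n - m := Nat.mod_eq_of_lt (by omega)
      rw [hmod]
      congr 1
      have hab : ζ ^ m * ζ ^ (n - m) = 1 := by
        rw [← pow_add, show m + (n - m) = n by omega]
        exact hζn
      have h1 : v - ζ ^ m * u ≠ 0 := sub_ne_zero.2 (hv m hm)
      have h2 : u - ζ ^ (n - m) * v ≠ 0 := sub_ne_zero.2 (hu (n - m) (by omega))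
      have h3 : u - ζ ^ (n - m) * v = -(ζ ^ (n - m)) * (v - ζ ^ m * u) := by
        linear_combination (-u) * hab
      have h4 : ζ ^ (n - m) = (ζ ^ m)⁻¹ := eq_inv_of_mul_eq_one_right hab
      rw [h3, neg_mul, inv_neg, neg_neg, mul_inv, h4, inv_inv, mul_comm]
  -- reindex the flipped sum by m ↦ n - m
  have hre : ∑ m ∈ Finset.range n,
        (-(u - ζ ^ ((n - m) % n) * v)⁻¹) • idT ((⇑ω)^[(n - m) % n]) K
      = ∑ m ∈ Finset.range n, (-(u - ζ ^ m * v)⁻¹) • idT ((⇑ω)^[m]) K := by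
    refine Finset.sum_nbij' (fun m => (n - m) % n) (fun m => (n - m) % n) ?_ ?_ ?_ ?_ ?_
    · intro a ha
      exact Finset.mem_range.2 (Nat.mod_lt _ hn)
    · intro a ha
      exact Finset.mem_range.2 (Nat.mod_lt _ hn)
    · intro a ha
      rw [Finset.mem_range] at ha
      show (n - (n - a) % n) % n = a
      rcases Nat.eq_zero_or_pos a with h0 | hpos
      · subst h0; simp
      · have hmod : (n - a) % n = n - a := Nat.mod_eq_of_lt (by omega)
        rw [hmod, Nat.sub_sub_self (le_of_lt ha), Nat.mod_eq_of_lt ha]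
    · intro a ha
      rw [Finset.mem_range] at ha
      show (n - (n - a) % n) % n = a
      rcases Nat.eq_zero_or_pos a with h0 | hpos
      · subst h0; simp
      · have hmod : (n - a) % n = n - a := Nat.mod_eq_of_lt (by omega)
        rw [hmod, Nat.sub_sub_self (le_of_lt ha), Nat.mod_eq_of_lt ha]
    · intro a ha
      rfl
  show (∑ m ∈ Finset.range n, (u - ζ ^ m * v)⁻¹ • idT ((⇑ω)^[m]) K)
      + sFlip par (∑ m ∈ Finset.range n, (v - ζ ^ m * u)⁻¹ • idT ((⇑ω)^[m]) K) = 0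
  rw [sFlip_sum, Finset.sum_congr rfl hterm, hre, ← Finset.sum_add_distrib]
  refine Finset.sum_eq_zero fun m hm => ?_
  rw [neg_smul]
  exact add_neg_cancel _
end

section
/- Let a be a finite-dimensional Lie superalgebra, K ∈ a⊗a an even, symmetric, a-invariant element, ω an automorphism of a of order n with (ω⊗ω)(K) = ζ·K for ζ a primitive n-th root of unity. Then r(u,v) = Σ_{m ∈ ℤ/n} (id⊗ω^m)(K)/(u − ζ^m v) satisfies the classical Yang–Baxter equation: [r_{12}(u,v), r_{13}(u,w)] + [r_{12}(u,v), r_{23}(v,w)] + [r_{13}(u,w), r_{23}(v,w)] = 0 in U(a)^{⊗3}(u,v,w). -/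
open Matrix

/- We model the finite-dimensional Lie superalgebra `a` as a ℤ₂-graded subspace `L` of a
matrix superalgebra `Matrix ι ι ℂ` (with parity function `par` on the indices), closed
under the supercommutator — every finite-dimensional Lie superalgebra admits such a
faithful realization.  Elements of the super tensor square `a ⊗ a` are recorded by their
coefficient matrices: `Z p q` is the coefficient of `E_{p.1 q.1} ⊗ E_{p.2 q.2}`. -/

variable {ι : Type*}

/-- Triple super tensor product: coefficient matrices, `Z p q` the coefficient of
`E_{p.1 q.1} ⊗ E_{p.2.1 q.2.1} ⊗ E_{p.2.2 q.2.2}`. -/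
noncomputable def sMul3 [Fintype ι] (par : ι → ℕ)
    (Z W : Matrix (ι × ι × ι) (ι × ι × ι) ℂ) : Matrix (ι × ι × ι) (ι × ι × ι) ℂ :=
  Matrix.of fun p q => ∑ a : ι, ∑ b : ι, ∑ c : ι,
    (-1 : ℂ) ^ ((par a + par q.1) * (par p.2.1 + par b + par p.2.2 + par c)
        + (par b + par q.2.1) * (par p.2.2 + par c))
      * Z p (a, b, c) * W (a, b, c) q

/-- The odd part of an element of the triple super tensor product. -/
noncomputable def oddPart3 (par : ι → ℕ) (Z : Matrix (ι × ι × ι) (ι × ι × ι) ℂ) :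
    Matrix (ι × ι × ι) (ι × ι × ι) ℂ :=
  Matrix.of fun p q =>
    if (par p.1 + par p.2.1 + par p.2.2 + par q.1 + par q.2.1 + par q.2.2) % 2 = 1
    then Z p q else 0

/-- The supercommutator in the triple super tensor product. -/
noncomputable def sbr3 [Fintype ι] (par : ι → ℕ)
    (Z W : Matrix (ι × ι × ι) (ι × ι × ι) ℂ) : Matrix (ι × ι × ι) (ι × ι × ι) ℂ :=
  sMul3 par Z W - sMul3 par W Z + (2 : ℂ) • sMul3 par (oddPart3 par W) (oddPart3 par Z)

/-- Embedding of the super tensor square into factors 1,2 of the triple product. -/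
noncomputable def emb12 [DecidableEq ι] (Z : Matrix (ι × ι) (ι × ι) ℂ) :
    Matrix (ι × ι × ι) (ι × ι × ι) ℂ :=
  Matrix.of fun p q => Z (p.1, p.2.1) (q.1, q.2.1) * (if p.2.2 = q.2.2 then 1 else 0)

/-- Embedding of the super tensor square into factors 1,3 of the triple product. -/
noncomputable def emb13 [DecidableEq ι] (Z : Matrix (ι × ι) (ι × ι) ℂ) :
    Matrix (ι × ι × ι) (ι × ι × ι) ℂ :=
  Matrix.of fun p q => Z (p.1, p.2.2) (q.1, q.2.2) * (if p.2.1 = q.2.1 then 1 else 0)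

/-- Embedding of the super tensor square into factors 2,3 of the triple product. -/
noncomputable def emb23 [DecidableEq ι] (Z : Matrix (ι × ι) (ι × ι) ℂ) :
    Matrix (ι × ι × ι) (ι × ι × ι) ℂ :=
  Matrix.of fun p q => (if p.1 = q.1 then 1 else 0) * Z p.2 q.2

namespace CYBEaux

open Matrix

variable {ι : Type*}

/-- sign helper -/
lemma m1p (a b : ℕ) (h : a % 2 = b % 2) : ((-1 : ℂ)) ^ a = (-1) ^ b := by
  rw [neg_one_pow_eq_pow_mod_two, h, ← neg_one_pow_eq_pow_mod_two]

/-- slice fixing second-factor indices -/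
noncomputable def sl1 (Z : Matrix (ι × ι) (ι × ι) ℂ) (s t : ι) : Matrix ι ι ℂ :=
  Matrix.of fun i j => Z (i, s) (j, t)

/-- slice fixing first-factor indices -/
noncomputable def sl2 (Z : Matrix (ι × ι) (ι × ι) ℂ) (s t : ι) : Matrix ι ι ℂ :=
  Matrix.of fun j l => Z (s, j) (t, l)

noncomputable def cE (par : ι → ℕ) (m : ℕ) (M : Matrix ι ι ℂ) : Matrix ι ι ℂ :=
  Matrix.of fun i j => (-1 : ℂ) ^ (m * (par i + par j)) * M i j

/-- entry support parity -/
def Hp (par : ι → ℕ) (d : ℕ) (M : Matrix ι ι ℂ) : Prop :=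
  ∀ i j, (par i + par j) % 2 ≠ d % 2 → M i j = 0

def Ev2 (par : ι → ℕ) (Z : Matrix (ι × ι) (ι × ι) ℂ) : Prop :=
  ∀ p q : ι × ι, (par p.1 + par p.2 + par q.1 + par q.2) % 2 = 1 → Z p q = 0

lemma idT_apply (f : Matrix ι ι ℂ → Matrix ι ι ℂ) (Z : Matrix (ι × ι) (ι × ι) ℂ) (p q : ι × ι) :
    idT f Z p q = f (sl2 Z p.1 q.1) p.2 q.2 := rfl

lemma tId_apply (f : Matrix ι ι ℂ → Matrix ι ι ℂ) (Z : Matrix (ι × ι) (ι × ι) ℂ) (p q : ι × ι) :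
    tId f Z p q = f (sl1 Z p.2 q.2) p.1 q.1 := rfl

lemma sl2_idT (f : Matrix ι ι ℂ → Matrix ι ι ℂ) (Z : Matrix (ι × ι) (ι × ι) ℂ) (s t : ι) :
    sl2 (idT f Z) s t = f (sl2 Z s t) := rfl

lemma sl1_tId (f : Matrix ι ι ℂ → Matrix ι ι ℂ) (Z : Matrix (ι × ι) (ι × ι) ℂ) (s t : ι) :
    sl1 (tId f Z) s t = f (sl1 Z s t) := rfl

lemma sl2_tId (f : Matrix ι ι ℂ → Matrix ι ι ℂ) (Z : Matrix (ι × ι) (ι × ι) ℂ) (s t j l : ι) :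
    sl2 (tId f Z) s t j l = f (sl1 Z j l) s t := rfl

lemma sl1_idT (f : Matrix ι ι ℂ → Matrix ι ι ℂ) (Z : Matrix (ι × ι) (ι × ι) ℂ) (s t i k : ι) :
    sl1 (idT f Z) s t i k = f (sl2 Z i k) s t := rfl

lemma idT_idT (f g : Matrix ι ι ℂ → Matrix ι ι ℂ) (Z : Matrix (ι × ι) (ι × ι) ℂ) :
    idT f (idT g Z) = idT (f ∘ g) Z := rfl

lemma tId_tId (f g : Matrix ι ι ℂ → Matrix ι ι ℂ) (Z : Matrix (ι × ι) (ι × ι) ℂ) :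
    tId f (tId g Z) = tId (f ∘ g) Z := rfl

lemma idT_id (Z : Matrix (ι × ι) (ι × ι) ℂ) : idT id Z = Z := rfl

lemma tId_id (Z : Matrix (ι × ι) (ι × ι) ℂ) : tId id Z = Z := rfl

lemma idT_smul (F : Matrix ι ι ℂ →ₗ[ℂ] Matrix ι ι ℂ) (c : ℂ) (Z : Matrix (ι × ι) (ι × ι) ℂ) :
    idT (⇑F) (c • Z) = c • idT (⇑F) Z := by
  ext p q
  have h : sl2 (c • Z) p.1 q.1 = c • sl2 Z p.1 q.1 := rfl
  simp [idT_apply, h, Matrix.smul_apply]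

variable [Fintype ι] [DecidableEq ι]

lemma linF_apply (F : Matrix ι ι ℂ →ₗ[ℂ] Matrix ι ι ℂ) (M : Matrix ι ι ℂ) (x y : ι) :
    F M x y = ∑ i : ι, ∑ k : ι, M i k * F (Matrix.single i k 1) x y := by
  conv_lhs => rw [Matrix.matrix_eq_sum_single M]
  rw [map_sum]
  simp only [Matrix.sum_apply]
  refine Finset.sum_congr rfl fun i _ => ?_
  rw [map_sum]
  simp only [Matrix.sum_apply]
  refine Finset.sum_congr rfl fun k _ => ?_
  have : Matrix.single i k (M i k) = M i k • Matrix.single i k 1 := by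
    ext a b; simp [Matrix.single, Matrix.smul_apply, mul_ite]
  rw [this, _root_.map_smul]
  simp

lemma sum4_comm (g : ι → ι → ι → ι → ℂ) :
    ∑ i : ι, ∑ k : ι, ∑ j : ι, ∑ l : ι, g i k j l
      = ∑ j : ι, ∑ l : ι, ∑ i : ι, ∑ k : ι, g i k j l := by
  have h1 : ∑ i : ι, ∑ k : ι, ∑ j : ι, ∑ l : ι, g i k j l
      = ∑ i : ι, ∑ j : ι, ∑ k : ι, ∑ l : ι, g i k j l :=
    Finset.sum_congr rfl fun i _ => Finset.sum_comm
  rw [h1, Finset.sum_comm]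
  refine Finset.sum_congr rfl fun j _ => ?_
  have h2 : ∑ i : ι, ∑ k : ι, ∑ l : ι, g i k j l
      = ∑ i : ι, ∑ l : ι, ∑ k : ι, g i k j l :=
    Finset.sum_congr rfl fun i _ => Finset.sum_comm
  rw [h2, Finset.sum_comm]

/-- Fubini: tensor-factor operations commute -/
lemma tId_comm_idT (F G : Matrix ι ι ℂ →ₗ[ℂ] Matrix ι ι ℂ) (Z : Matrix (ι × ι) (ι × ι) ℂ) :
    tId (⇑F) (idT (⇑G) Z) = idT (⇑G) (tId (⇑F) Z) := by
  ext p q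
  rw [tId_apply, idT_apply]
  rw [linF_apply F (sl1 (idT (⇑G) Z) p.2 q.2), linF_apply G (sl2 (tId (⇑F) Z) p.1 q.1)]
  simp only [sl1_idT, sl2_tId]
  have lhs : ∀ i k, G (sl2 Z i k) p.2 q.2 = ∑ j : ι, ∑ l : ι,
      Z (i, j) (k, l) * G (Matrix.single j l 1) p.2 q.2 := by
    intro i k; rw [linF_apply]; rfl
  have rhs : ∀ j l, F (sl1 Z j l) p.1 q.1 = ∑ i : ι, ∑ k : ι,
      Z (i, j) (k, l) * F (Matrix.single i k 1) p.1 q.1 := by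
    intro j l; rw [linF_apply]; rfl
  simp only [lhs, rhs, Finset.mul_sum, Finset.sum_mul]
  rw [sum4_comm (fun i k j l => Z (i, j) (k, l) * G (Matrix.single j l 1) p.2 q.2 *
    F (Matrix.single i k 1) p.1 q.1)]
  refine Finset.sum_congr rfl fun j _ => Finset.sum_congr rfl fun l _ =>
    Finset.sum_congr rfl fun i _ => Finset.sum_congr rfl fun k _ => by ring

end CYBEaux
namespace CYBEaux
set_option linter.unusedSectionVars false
set_option maxHeartbeats 1000000
open Matrix
variable {ι : Type*} [Fintype ι] [DecidableEq ι]

lemma mod2_mul_congr {a b c d : ℕ} (h1 : a % 2 = c % 2) (h2 : b % 2 = d % 2) :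
    (a * b) % 2 = (c * d) % 2 := by rw [Nat.mul_mod, h1, h2, ← Nat.mul_mod]

lemma m1p_prod {a b c d : ℕ} (h1 : a % 2 = c % 2) (h2 : b % 2 = d % 2) :
    ((-1 : ℂ)) ^ (a * b) = (-1) ^ (c * d) := m1p _ _ (mod2_mul_congr h1 h2)

lemma sq_mod2 (m : ℕ) : (m * m) % 2 = m % 2 := by
  rw [Nat.mul_mod]
  rcases Nat.mod_two_eq_zero_or_one m with h | h <;> rw [h]

section Omega
variable (par : ι → ℕ) (L : Submodule ℂ (Matrix ι ι ℂ))
    (ω : Matrix ι ι ℂ →ₗ[ℂ] Matrix ι ι ℂ)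

lemma ωit_mem (hω_mem : ∀ X ∈ L, ω X ∈ L) (m : ℕ) : ∀ X ∈ L, (⇑ω)^[m] X ∈ L := by
  induction m with
  | zero => intro X hX; simpa using hX
  | succ k ih =>
      intro X hX
      rw [Function.iterate_succ_apply']
      exact hω_mem _ (ih X hX)

lemma ωit_lie (hω_mem : ∀ X ∈ L, ω X ∈ L)
    (hω_lie : ∀ X ∈ L, ∀ Y ∈ L, ω (sbr par X Y) = sbr par (ω X) (ω Y)) (m : ℕ) :
    ∀ X ∈ L, ∀ Y ∈ L,
    (⇑ω)^[m] (sbr par X Y) = sbr par ((⇑ω)^[m] X) ((⇑ω)^[m] Y) := by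
  induction m with
  | zero => intro X _ Y _; simp
  | succ k ih =>
      intro X hX Y hY
      rw [Function.iterate_succ_apply', Function.iterate_succ_apply',
        Function.iterate_succ_apply', ih X hX Y hY,
        hω_lie _ (ωit_mem L ω hω_mem k X hX) _ (ωit_mem L ω hω_mem k Y hY)]

lemma ωit_par (hω_mem : ∀ X ∈ L, ω X ∈ L)
    (hω_par : ∀ X ∈ L, ω (epsMat par * X * epsMat par) = epsMat par * ω X * epsMat par)
    (m : ℕ) : ∀ X ∈ L,
    (⇑ω)^[m] (epsMat par * X * epsMat par) = epsMat par * (⇑ω)^[m] X * epsMat par := by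
  induction m with
  | zero => intro X _; simp
  | succ k ih =>
      intro X hX
      rw [Function.iterate_succ_apply', Function.iterate_succ_apply', ih X hX,
        hω_par _ (ωit_mem L ω hω_mem k X hX)]

lemma cE_even (m : ℕ) (hm : m % 2 = 0) (M : Matrix ι ι ℂ) : cE par m M = M := by
  ext i j
  have h : (m * (par i + par j)) % 2 = (0 * (par i + par j)) % 2 :=
    mod2_mul_congr (by omega) rfl
  simp only [cE, Matrix.of_apply]
  rw [m1p _ _ h]
  simp

lemma cE_odd (m : ℕ) (hm : m % 2 = 1) (M : Matrix ι ι ℂ) :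
    cE par m M = epsMat par * M * epsMat par := by
  ext i j
  have h1 : (epsMat par * M * epsMat par) i j = (-1 : ℂ) ^ par i * M i j * (-1) ^ par j := by
    simp only [epsMat, Matrix.mul_diagonal, Matrix.diagonal_mul]
  have h2 : (m * (par i + par j)) % 2 = (1 * (par i + par j)) % 2 :=
    mod2_mul_congr (by omega) rfl
  rw [h1]
  simp only [cE, Matrix.of_apply]
  rw [m1p _ _ h2, one_mul, pow_add]
  ring

lemma cE_mem (hL_graded : ∀ X ∈ L, epsMat par * X * epsMat par ∈ L)
    (m : ℕ) (M : Matrix ι ι ℂ) (hM : M ∈ L) : cE par m M ∈ L := by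
  rcases Nat.mod_two_eq_zero_or_one m with h | h
  · rw [cE_even par m h]; exact hM
  · rw [cE_odd par m h]; exact hL_graded M hM

lemma ωit_cE (hω_mem : ∀ X ∈ L, ω X ∈ L)
    (hω_par : ∀ X ∈ L, ω (epsMat par * X * epsMat par) = epsMat par * ω X * epsMat par)
    (m c : ℕ) (M : Matrix ι ι ℂ) (hM : M ∈ L) :
    (⇑ω)^[m] (cE par c M) = cE par c ((⇑ω)^[m] M) := by
  rcases Nat.mod_two_eq_zero_or_one c with h | h
  · rw [cE_even par c h, cE_even par c h]
  · rw [cE_odd par c h, cE_odd par c h]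
    exact ωit_par par L ω hω_mem hω_par m M hM

lemma ωit_smul (m : ℕ) (c : ℂ) (M : Matrix ι ι ℂ) :
    (⇑ω)^[m] (c • M) = c • (⇑ω)^[m] M := by
  induction m with
  | zero => simp
  | succ k ih =>
      rw [Function.iterate_succ_apply', Function.iterate_succ_apply', ih, ω.map_smul]

lemma Hp_cE_iff (d : ℕ) (M : Matrix ι ι ℂ) :
    Hp par d M ↔ cE par 1 M = ((-1 : ℂ)) ^ d • M := by
  constructor
  · intro h
    ext i j
    by_cases h0 : (par i + par j) % 2 = d % 2
    · simp only [cE, Matrix.of_apply, Matrix.smul_apply, smul_eq_mul]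
      rw [m1p (1 * (par i + par j)) d (by omega)]
    · simp [cE, h i j h0, Matrix.smul_apply]
  · intro h i j h0
    have := congrFun (congrFun h i) j
    simp only [cE, Matrix.of_apply, Matrix.smul_apply, smul_eq_mul] at this
    rw [m1p (1 * (par i + par j)) ((par i + par j)) (by omega)] at this
    rw [neg_one_pow_eq_pow_mod_two] at this
    conv_rhs at this => rw [neg_one_pow_eq_pow_mod_two]
    rcases Nat.mod_two_eq_zero_or_one (par i + par j) with h1 | h1 <;>
      rcases Nat.mod_two_eq_zero_or_one d with h2 | h2 <;> rw [h1, h2] at this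
    · exact absurd (h1.trans h2.symm) h0
    · simp only [pow_zero, pow_one] at this
      linear_combination this / 2
    · simp only [pow_zero, pow_one] at this
      linear_combination - this / 2
    · exact absurd (h1.trans h2.symm) h0

lemma ωit_Hp (hω_mem : ∀ X ∈ L, ω X ∈ L)
    (hω_par : ∀ X ∈ L, ω (epsMat par * X * epsMat par) = epsMat par * ω X * epsMat par)
    (m d : ℕ) (M : Matrix ι ι ℂ) (hM : M ∈ L) (h : Hp par d M) :
    Hp par d ((⇑ω)^[m] M) := by
  rw [Hp_cE_iff] at h ⊢
  rw [← ωit_cE par L ω hω_mem hω_par m 1 M hM, h, ωit_smul ω]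

lemma cE_of_Hp (m : ℕ) (M : Matrix ι ι ℂ) (h : Hp par m M) :
    cE par m M = ((-1 : ℂ)) ^ m • M := by
  ext i j
  by_cases h0 : (par i + par j) % 2 = m % 2
  · simp only [cE, Matrix.of_apply, Matrix.smul_apply, smul_eq_mul]
    have hc : (m * (par i + par j)) % 2 = m % 2 := by
      rw [mod2_mul_congr (rfl : m % 2 = m % 2) h0, sq_mod2]
    rw [m1p _ _ hc, ← m1p _ _ (rfl : m % 2 = m % 2)]
  · simp [cE, h i j h0, Matrix.smul_apply]

end Omega
end CYBEaux
namespace CYBEaux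
open Matrix

variable {ι : Type*} [Fintype ι] [DecidableEq ι]

structure Setup (ι : Type*) [Fintype ι] [DecidableEq ι] where
  par : ι → ℕ
  L : Submodule ℂ (Matrix ι ι ℂ)
  hL_graded : ∀ X ∈ L, epsMat par * X * epsMat par ∈ L
  hL_lie : ∀ X ∈ L, ∀ Y ∈ L, sbr par X Y ∈ L
  K : Matrix (ι × ι) (ι × ι) ℂ
  hK_mem : K ∈ Submodule.span ℂ {Z | ∃ X ∈ L, ∃ Y ∈ L, Z = tmat X Y}
  hK_even : ∀ p q : ι × ι, (par p.1 + par p.2 + par q.1 + par q.2) % 2 = 1 → K p q = 0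
  hK_sym : sFlip par K = K
  hK_inv : ∀ X ∈ L, sbr2 par (tmat X 1 + tmat 1 X) K = 0
  n : ℕ
  hn : 0 < n
  ω : Matrix ι ι ℂ →ₗ[ℂ] Matrix ι ι ℂ
  hω_mem : ∀ X ∈ L, ω X ∈ L
  hω_lie : ∀ X ∈ L, ∀ Y ∈ L, ω (sbr par X Y) = sbr par (ω X) (ω Y)
  hω_par : ∀ X ∈ L, ω (epsMat par * X * epsMat par) = epsMat par * ω X * epsMat par
  hω_ord : ∀ X ∈ L, (⇑ω)^[n] X = X
  ζ : ℂ
  hζ : IsPrimitiveRoot ζ n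
  hωK : idT (⇑ω) (tId (⇑ω) K) = ζ • K

namespace Setup

variable (S : Setup ι)

/-- slices of K lie in L -/
lemma sl_mem : ∀ s t : ι, sl1 S.K s t ∈ S.L ∧ sl2 S.K s t ∈ S.L := by
  let V : Submodule ℂ (Matrix (ι × ι) (ι × ι) ℂ) :=
  { carrier := {Z | ∀ s t : ι, sl1 Z s t ∈ S.L ∧ sl2 Z s t ∈ S.L}
    add_mem' := by
      intro a b ha hb s t
      have e1 : sl1 (a + b) s t = sl1 a s t + sl1 b s t := by ext i j; simp [sl1]
      have e2 : sl2 (a + b) s t = sl2 a s t + sl2 b s t := by ext i j; simp [sl2]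
      exact ⟨e1 ▸ Submodule.add_mem _ (ha s t).1 (hb s t).1,
        e2 ▸ Submodule.add_mem _ (ha s t).2 (hb s t).2⟩
    zero_mem' := by
      intro s t
      have e1 : sl1 (0 : Matrix (ι × ι) (ι × ι) ℂ) s t = 0 := by ext i j; simp [sl1]
      have e2 : sl2 (0 : Matrix (ι × ι) (ι × ι) ℂ) s t = 0 := by ext i j; simp [sl2]
      exact ⟨e1 ▸ Submodule.zero_mem _, e2 ▸ Submodule.zero_mem _⟩
    smul_mem' := by
      intro c a ha s t
      have e1 : sl1 (c • a) s t = c • sl1 a s t := by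
        ext i j; simp [sl1, Matrix.smul_apply]
      have e2 : sl2 (c • a) s t = c • sl2 a s t := by
        ext i j; simp [sl2, Matrix.smul_apply]
      exact ⟨e1 ▸ Submodule.smul_mem _ c (ha s t).1,
        e2 ▸ Submodule.smul_mem _ c (ha s t).2⟩ }
  have hle : Submodule.span ℂ {Z | ∃ X ∈ S.L, ∃ Y ∈ S.L, Z = tmat X Y} ≤ V := by
    rw [Submodule.span_le]
    rintro Z ⟨X, hX, Y, hY, rfl⟩ s t
    have e1 : sl1 (tmat X Y) s t = Y s t • X := by
      ext i j; simp [sl1, tmat, Matrix.smul_apply]; ring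
    have e2 : sl2 (tmat X Y) s t = X s t • Y := by
      ext i j; simp [sl2, tmat, Matrix.smul_apply]
    exact ⟨e1 ▸ Submodule.smul_mem _ _ hX, e2 ▸ Submodule.smul_mem _ _ hY⟩
  exact hle S.hK_mem

lemma sl1_mem (s t : ι) : sl1 S.K s t ∈ S.L := (S.sl_mem s t).1
lemma sl2_mem (s t : ι) : sl2 S.K s t ∈ S.L := (S.sl_mem s t).2

lemma Hp_sl1 (s t : ι) : Hp S.par (S.par s + S.par t) (sl1 S.K s t) := by
  intro i j h0
  exact S.hK_even (i, s) (j, t)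
    (show (S.par i + S.par s + S.par j + S.par t) % 2 = 1 by omega)

lemma Hp_sl2 (s t : ι) : Hp S.par (S.par s + S.par t) (sl2 S.K s t) := by
  intro i j h0
  exact S.hK_even (s, i) (t, j)
    (show (S.par s + S.par i + S.par t + S.par j) % 2 = 1 by omega)

/-- (id ⊗ ω^m) K -/
noncomputable def KK (m : ℕ) : Matrix (ι × ι) (ι × ι) ℂ := idT ((⇑S.ω)^[m]) S.K

/-- (ω^e ⊗ id) K -/
noncomputable def tK (e : ℕ) : Matrix (ι × ι) (ι × ι) ℂ := tId ((⇑S.ω)^[e]) S.K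

lemma KK_apply (m : ℕ) (p q : ι × ι) :
    S.KK m p q = (⇑S.ω)^[m] (sl2 S.K p.1 q.1) p.2 q.2 := rfl

lemma tK_apply (e : ℕ) (p q : ι × ι) :
    S.tK e p q = (⇑S.ω)^[e] (sl1 S.K p.2 q.2) p.1 q.1 := rfl

lemma Ev2_KK (m : ℕ) : Ev2 S.par (S.KK m) := by
  intro p q h
  rw [KK_apply]
  have hp : Hp S.par (S.par p.1 + S.par q.1) ((⇑S.ω)^[m] (sl2 S.K p.1 q.1)) :=
    ωit_Hp S.par S.L S.ω S.hω_mem S.hω_par m _ _ (S.sl2_mem p.1 q.1) (S.Hp_sl2 p.1 q.1)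
  exact hp p.2 q.2 (by omega)

lemma Ev2_tK (e : ℕ) : Ev2 S.par (S.tK e) := by
  intro p q h
  rw [tK_apply]
  have hp : Hp S.par (S.par p.2 + S.par q.2) ((⇑S.ω)^[e] (sl1 S.K p.2 q.2)) :=
    ωit_Hp S.par S.L S.ω S.hω_mem S.hω_par e _ _ (S.sl1_mem p.2 q.2) (S.Hp_sl1 p.2 q.2)
  exact hp p.1 q.1 (by omega)

lemma Ev2_K : Ev2 S.par S.K := S.hK_even

lemma KK_zero : S.KK 0 = S.K := rfl

lemma idT_n : idT ((⇑S.ω)^[S.n]) S.K = S.K := by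
  ext p q
  rw [idT_apply, S.hω_ord _ (S.sl2_mem p.1 q.1)]
  rfl

lemma KK_add_n (m : ℕ) : S.KK (m + S.n) = S.KK m := by
  show idT ((⇑S.ω)^[m + S.n]) S.K = _
  rw [Function.iterate_add, ← idT_idT, S.idT_n]
  rfl

lemma KK_mod (m : ℕ) : S.KK m = S.KK (m % S.n) := by
  have aux : ∀ q r : ℕ, S.KK (r + q * S.n) = S.KK r := by
    intro q
    induction q with
    | zero => simp
    | succ k ih =>
        intro r
        have : r + (k + 1) * S.n = (r + k * S.n) + S.n := by ring
        rw [this, KK_add_n, ih]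
  conv_lhs => rw [← Nat.mod_add_div' m S.n]
  exact aux _ _

lemma tId_smul_it (m : ℕ) (c : ℂ) (Z : Matrix (ι × ι) (ι × ι) ℂ) :
    tId ((⇑S.ω)^[m]) (c • Z) = c • tId ((⇑S.ω)^[m]) Z := by
  ext p q
  have h : sl1 (c • Z) p.2 q.2 = c • sl1 Z p.2 q.2 := by
    ext i j; simp [sl1, Matrix.smul_apply]
  rw [tId_apply, h, ωit_smul S.ω]
  simp only [Matrix.smul_apply, smul_eq_mul]
  rw [tId_apply]

lemma idT_smul_it (m : ℕ) (c : ℂ) (Z : Matrix (ι × ι) (ι × ι) ℂ) :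
    idT ((⇑S.ω)^[m]) (c • Z) = c • idT ((⇑S.ω)^[m]) Z := by
  ext p q
  have h : sl2 (c • Z) p.1 q.1 = c • sl2 Z p.1 q.1 := by
    ext i j; simp [sl2, Matrix.smul_apply]
  rw [idT_apply, h, ωit_smul S.ω]
  simp only [Matrix.smul_apply, smul_eq_mul]
  rw [idT_apply]

lemma coe_pow (m : ℕ) : ⇑(S.ω ^ m) = (⇑S.ω)^[m] := funext (Module.End.pow_apply S.ω m)

lemma tK_step (m : ℕ) : tId (⇑S.ω) (S.KK (m + 1)) = S.ζ • S.KK m := by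
  have h1 : tId (⇑S.ω) (S.KK (m + 1)) = idT (⇑(S.ω ^ (m + 1))) (tId (⇑S.ω) S.K) := by
    show tId (⇑S.ω) (idT ((⇑S.ω)^[m+1]) S.K) = _
    rw [← S.coe_pow (m + 1)]
    exact tId_comm_idT S.ω (S.ω ^ (m + 1)) S.K
  have h2 : idT (⇑(S.ω ^ (m + 1))) (tId (⇑S.ω) S.K)
      = idT ((⇑S.ω)^[m]) (idT (⇑S.ω) (tId (⇑S.ω) S.K)) := by
    rw [idT_idT, S.coe_pow (m + 1), ← Function.iterate_succ]
  rw [h1, h2, S.hωK, idT_smul_it]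
  rfl

lemma tK_KK (j k : ℕ) : tId ((⇑S.ω)^[j]) (S.KK (j + k)) = S.ζ ^ j • S.KK k := by
  induction j with
  | zero => simp [tId_id]
  | succ m ih =>
      have hit : (⇑S.ω)^[m + 1] = (⇑S.ω)^[m] ∘ (⇑S.ω) := Function.iterate_succ _ _
      rw [hit, ← tId_tId]
      have : S.KK (m + 1 + k) = S.KK ((m + k) + 1) := by ring_nf
      rw [this, tK_step, tId_smul_it, ih, smul_smul, ← pow_succ']

/-- symmetry: first-factor slices vs second-factor slices -/
lemma sl1_eq_cE_sl2 (s t : ι) :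
    sl1 S.K s t = cE S.par (S.par s + S.par t) (sl2 S.K s t) := by
  ext i j
  have h := congrFun (congrFun S.hK_sym (i, s)) (j, t)
  simp only [sFlip, Matrix.of_apply] at h
  simp only [cE, sl1, sl2, Matrix.of_apply]
  rw [Nat.mul_comm (S.par s + S.par t) (S.par i + S.par j)]
  exact h.symm

lemma cE_cE (m : ℕ) (M : Matrix ι ι ℂ) : cE S.par m (cE S.par m M) = M := by
  ext i j
  simp only [cE, Matrix.of_apply, ← mul_assoc, ← pow_add]
  rw [m1p (m * (S.par i + S.par j) + m * (S.par i + S.par j)) 0 (by omega)]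
  simp

lemma sl2_eq_smul_sl1 (s t : ι) :
    sl2 S.K s t = ((-1 : ℂ)) ^ (S.par s + S.par t) • sl1 S.K s t := by
  have h := S.sl1_eq_cE_sl2 s t
  have h2 : cE S.par (S.par s + S.par t) (sl1 S.K s t) = sl2 S.K s t := by
    rw [h, cE_cE]
  rw [← h2, cE_of_Hp S.par _ _ (S.Hp_sl1 s t)]

end Setup
end CYBEaux
namespace CYBEaux
set_option linter.unusedSectionVars false
set_option maxHeartbeats 1000000
open Matrix
variable {ι : Type*} [Fintype ι] [DecidableEq ι] (par : ι → ℕ)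

lemma mod2_of_zmod {a b : ℕ} (h : ((a : ZMod 2)) = (b : ZMod 2)) : a % 2 = b % 2 :=
  (ZMod.natCast_eq_natCast_iff a b 2).mp h

lemma nat_zmod_of_mod2 {a b : ℕ} (h : a % 2 = b % 2) : ((a : ZMod 2)) = (b : ZMod 2) :=
  (ZMod.natCast_eq_natCast_iff a b 2).mpr h

lemma sign_eq {e1 e2 : ℕ} (x y : ℂ) (h : e1 % 2 = e2 % 2) :
    ((-1 : ℂ)) ^ e1 * x * y = (-1) ^ e2 * x * y := by rw [m1p e1 e2 h]

lemma sign_merge {e1 e2 e3 : ℕ} (x y : ℂ) (h : e1 % 2 = (e2 + e3) % 2) :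
    ((-1 : ℂ)) ^ e1 * x * y = (-1) ^ e2 * ((-1) ^ e3 * x * y) := by
  rw [m1p e1 (e2 + e3) h, pow_add]; ring

lemma zh_T1a : ∀ a b c d e : ZMod 2,
    (a+b)*(c+d+e+e) + (d+d)*(e+e) = (a+b)*(c+d) := by decide
lemma zh_T1b' : ∀ a b c e f g : ZMod 2, a + c + b + g = 0 →
    (a+b)*(c+c+e+f) + (c+g)*(e+f) = (a+b)*(c+c) := by decide
lemma zh_T1c : ∀ a b c d e : ZMod 2,
    (b+b)*(c+a+e+e) + (a+d)*(e+e) = (b+b)*(c+a) := by decide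
lemma zh_T1d : ∀ a b c d e f g : ZMod 2, g + a + b + d = 0 →
    (g+b)*(c+a+e+f) + (a+d)*(e+f) = (g+b)*(c+a) := by decide
lemma zh_T2a : ∀ a b c d e f g : ZMod 2, g + e + a + f = 0 → a + c + b + d = 0 →
    (a+b)*(c+c+e+f) + (c+d)*(e+f) = (c+d)*(g+b+1) + (a+b)*(e+f) := by decide
lemma zh_T2b : ∀ a b c d e f g : ZMod 2, g + c + a + d = 0 → a + e + b + f = 0 →
    (a+b)*(c+d+e+e) + (d+d)*(e+e) = (c+d)*(g+b+1) + (a+b)*(e+e) := by decide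
lemma zh_T2c : ∀ a b c d e g : ZMod 2, g + e + b + a = 0 →
    (b+b)*(c+c+e+a) + (c+d)*(e+a) = (c+d)*(g+b) + (b+b)*(e+a) := by decide
lemma zh_T2d : ∀ a b c d e g : ZMod 2,
    (g+b)*(c+d+e+a) + (d+d)*(e+a) = (c+d)*(g+b) + (g+b)*(e+a) := by decide

section TL
variable {A B C : Matrix (ι × ι) (ι × ι) ℂ} (p q : ι × ι × ι)

lemma T1a (A B : Matrix (ι × ι) (ι × ι) ℂ) :
    sMul3 par (emb12 A) (emb13 B) p q
      = sMul2 par A (tmat (sl1 B p.2.2 q.2.2) 1) (p.1, p.2.1) (q.1, q.2.1) := by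
  simp only [sMul3, sMul2, emb12, emb13, emb23, tmat, sl1, sl2, Matrix.of_apply,
    Matrix.one_apply, mul_ite, ite_mul, mul_one, one_mul, mul_zero, zero_mul,
    Finset.sum_ite_irrel, Finset.sum_const_zero, Finset.sum_ite_eq, Finset.sum_ite_eq',
    Finset.mem_univ, if_true, Prod.mk.eta, Finset.mul_sum]
  refine Finset.sum_congr rfl fun x _ => ?_
  exact sign_eq _ _ (mod2_of_zmod (by push_cast; exact zh_T1a _ _ _ _ _))

lemma T1b (hA : Ev2 par A) (B : Matrix (ι × ι) (ι × ι) ℂ) :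
    sMul3 par (emb13 B) (emb12 A) p q
      = sMul2 par (tmat (sl1 B p.2.2 q.2.2) 1) A (p.1, p.2.1) (q.1, q.2.1) := by
  simp only [sMul3, sMul2, emb12, emb13, emb23, tmat, sl1, sl2, Matrix.of_apply,
    Matrix.one_apply, mul_ite, ite_mul, mul_one, one_mul, mul_zero, zero_mul,
    Finset.sum_ite_irrel, Finset.sum_const_zero, Finset.sum_ite_eq, Finset.sum_ite_eq',
    Finset.mem_univ, if_true, Prod.mk.eta, Finset.mul_sum]
  refine Finset.sum_congr rfl fun x _ => ?_
  by_cases hAe : A (x, p.2.1) (q.1, q.2.1) = 0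
  · rw [hAe]; ring
  · have hsup : (par x + par p.2.1 + par q.1 + par q.2.1) % 2 = 0 := by
      rcases Nat.mod_two_eq_zero_or_one (par x + par p.2.1 + par q.1 + par q.2.1) with h | h
      · exact h
      · exact absurd (hA (x, p.2.1) (q.1, q.2.1) h) hAe
    refine sign_eq _ _ (mod2_of_zmod ?_)
    have hs := nat_zmod_of_mod2 (a := par x + par p.2.1 + par q.1 + par q.2.1) (b := 0)
      (by omega)
    push_cast at hs ⊢
    exact zh_T1b' _ _ _ _ _ _ hs

lemma T1c (A C : Matrix (ι × ι) (ι × ι) ℂ) :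
    sMul3 par (emb12 A) (emb23 C) p q
      = sMul2 par A (tmat 1 (sl1 C p.2.2 q.2.2)) (p.1, p.2.1) (q.1, q.2.1) := by
  simp only [sMul3, sMul2, emb12, emb13, emb23, tmat, sl1, sl2, Matrix.of_apply,
    Matrix.one_apply, mul_ite, ite_mul, mul_one, one_mul, mul_zero, zero_mul,
    Finset.sum_ite_irrel, Finset.sum_const_zero, Finset.sum_ite_eq, Finset.sum_ite_eq',
    Finset.mem_univ, if_true, Prod.mk.eta, Finset.mul_sum]
  refine Finset.sum_congr rfl fun x _ => ?_
  exact sign_eq _ _ (mod2_of_zmod (by push_cast; exact zh_T1c _ _ _ _ _))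

lemma T1d (hA : Ev2 par A) (C : Matrix (ι × ι) (ι × ι) ℂ) :
    sMul3 par (emb23 C) (emb12 A) p q
      = sMul2 par (tmat 1 (sl1 C p.2.2 q.2.2)) A (p.1, p.2.1) (q.1, q.2.1) := by
  simp only [sMul3, sMul2, emb12, emb13, emb23, tmat, sl1, sl2, Matrix.of_apply,
    Matrix.one_apply, mul_ite, ite_mul, mul_one, one_mul, mul_zero, zero_mul,
    Finset.sum_ite_irrel, Finset.sum_const_zero, Finset.sum_ite_eq, Finset.sum_ite_eq',
    Finset.mem_univ, if_true, Prod.mk.eta, Finset.mul_sum]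
  refine Finset.sum_congr rfl fun x _ => ?_
  by_cases hAe : A (p.1, x) (q.1, q.2.1) = 0
  · rw [hAe]; ring
  · have hsup : (par p.1 + par x + par q.1 + par q.2.1) % 2 = 0 := by
      rcases Nat.mod_two_eq_zero_or_one (par p.1 + par x + par q.1 + par q.2.1) with h | h
      · exact h
      · exact absurd (hA (p.1, x) (q.1, q.2.1) h) hAe
    refine sign_eq _ _ (mod2_of_zmod ?_)
    have hs := nat_zmod_of_mod2 (a := par p.1 + par x + par q.1 + par q.2.1) (b := 0)
      (by omega)
    push_cast at hs ⊢
    exact zh_T1d _ _ _ _ _ _ _ hs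

lemma T2a (hA : Ev2 par A) (hB : Ev2 par B) :
    sMul3 par (emb13 A) (emb12 B) p q
      = (-1 : ℂ) ^ ((par p.2.1 + par q.2.1) * (par p.1 + par q.1 + 1))
        * sMul2 par A (tmat (sl1 B p.2.1 q.2.1) 1) (p.1, p.2.2) (q.1, q.2.2) := by
  simp only [sMul3, sMul2, emb12, emb13, emb23, tmat, sl1, sl2, Matrix.of_apply,
    Matrix.one_apply, mul_ite, ite_mul, mul_one, one_mul, mul_zero, zero_mul,
    Finset.sum_ite_irrel, Finset.sum_const_zero, Finset.sum_ite_eq, Finset.sum_ite_eq',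
    Finset.mem_univ, if_true, Prod.mk.eta, Finset.mul_sum]
  refine Finset.sum_congr rfl fun x _ => ?_
  by_cases hAe : A (p.1, p.2.2) (x, q.2.2) = 0
  · rw [hAe]; ring
  by_cases hBe : B (x, p.2.1) (q.1, q.2.1) = 0
  · rw [hBe]; ring
  have hs1 : (par p.1 + par p.2.2 + par x + par q.2.2) % 2 = 0 := by
    rcases Nat.mod_two_eq_zero_or_one (par p.1 + par p.2.2 + par x + par q.2.2) with h | h
    · exact h
    · exact absurd (hA (p.1, p.2.2) (x, q.2.2) h) hAe
  have hs2 : (par x + par p.2.1 + par q.1 + par q.2.1) % 2 = 0 := by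
    rcases Nat.mod_two_eq_zero_or_one (par x + par p.2.1 + par q.1 + par q.2.1) with h | h
    · exact h
    · exact absurd (hB (x, p.2.1) (q.1, q.2.1) h) hBe
  refine sign_merge _ _ (mod2_of_zmod ?_)
  have hz1 := nat_zmod_of_mod2 (a := par p.1 + par p.2.2 + par x + par q.2.2) (b := 0)
    (by omega)
  have hz2 := nat_zmod_of_mod2 (a := par x + par p.2.1 + par q.1 + par q.2.1) (b := 0)
    (by omega)
  push_cast at hz1 hz2 ⊢
  exact zh_T2a _ _ _ _ _ _ _ hz1 hz2

lemma T2b (hA : Ev2 par A) (hB : Ev2 par B) :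
    sMul3 par (emb12 B) (emb13 A) p q
      = (-1 : ℂ) ^ ((par p.2.1 + par q.2.1) * (par p.1 + par q.1 + 1))
        * sMul2 par (tmat (sl1 B p.2.1 q.2.1) 1) A (p.1, p.2.2) (q.1, q.2.2) := by
  simp only [sMul3, sMul2, emb12, emb13, emb23, tmat, sl1, sl2, Matrix.of_apply,
    Matrix.one_apply, mul_ite, ite_mul, mul_one, one_mul, mul_zero, zero_mul,
    Finset.sum_ite_irrel, Finset.sum_const_zero, Finset.sum_ite_eq, Finset.sum_ite_eq',
    Finset.mem_univ, if_true, Prod.mk.eta, Finset.mul_sum]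
  refine Finset.sum_congr rfl fun x _ => ?_
  by_cases hBe : B (p.1, p.2.1) (x, q.2.1) = 0
  · rw [hBe]; ring
  by_cases hAe : A (x, p.2.2) (q.1, q.2.2) = 0
  · rw [hAe]; ring
  have hs1 : (par p.1 + par p.2.1 + par x + par q.2.1) % 2 = 0 := by
    rcases Nat.mod_two_eq_zero_or_one (par p.1 + par p.2.1 + par x + par q.2.1) with h | h
    · exact h
    · exact absurd (hB (p.1, p.2.1) (x, q.2.1) h) hBe
  have hs2 : (par x + par p.2.2 + par q.1 + par q.2.2) % 2 = 0 := by
    rcases Nat.mod_two_eq_zero_or_one (par x + par p.2.2 + par q.1 + par q.2.2) with h | h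
    · exact h
    · exact absurd (hA (x, p.2.2) (q.1, q.2.2) h) hAe
  refine sign_merge _ _ (mod2_of_zmod ?_)
  have hz1 := nat_zmod_of_mod2 (a := par p.1 + par p.2.1 + par x + par q.2.1) (b := 0)
    (by omega)
  have hz2 := nat_zmod_of_mod2 (a := par x + par p.2.2 + par q.1 + par q.2.2) (b := 0)
    (by omega)
  push_cast at hz1 hz2 ⊢
  exact zh_T2b _ _ _ _ _ _ _ hz1 hz2

lemma T2c (hA : Ev2 par A) (C : Matrix (ι × ι) (ι × ι) ℂ) :
    sMul3 par (emb13 A) (emb23 C) p q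
      = (-1 : ℂ) ^ ((par p.2.1 + par q.2.1) * (par p.1 + par q.1))
        * sMul2 par A (tmat 1 (sl2 C p.2.1 q.2.1)) (p.1, p.2.2) (q.1, q.2.2) := by
  simp only [sMul3, sMul2, emb12, emb13, emb23, tmat, sl1, sl2, Matrix.of_apply,
    Matrix.one_apply, mul_ite, ite_mul, mul_one, one_mul, mul_zero, zero_mul,
    Finset.sum_ite_irrel, Finset.sum_const_zero, Finset.sum_ite_eq, Finset.sum_ite_eq',
    Finset.mem_univ, if_true, Prod.mk.eta, Finset.mul_sum]
  refine Finset.sum_congr rfl fun x _ => ?_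
  by_cases hAe : A (p.1, p.2.2) (q.1, x) = 0
  · rw [hAe]; ring
  have hs1 : (par p.1 + par p.2.2 + par q.1 + par x) % 2 = 0 := by
    rcases Nat.mod_two_eq_zero_or_one (par p.1 + par p.2.2 + par q.1 + par x) with h | h
    · exact h
    · exact absurd (hA (p.1, p.2.2) (q.1, x) h) hAe
  refine sign_merge _ _ (mod2_of_zmod ?_)
  have hz1 := nat_zmod_of_mod2 (a := par p.1 + par p.2.2 + par q.1 + par x) (b := 0)
    (by omega)
  push_cast at hz1 ⊢
  exact zh_T2c _ _ _ _ _ _ hz1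

lemma T2d (A C : Matrix (ι × ι) (ι × ι) ℂ) :
    sMul3 par (emb23 C) (emb13 A) p q
      = (-1 : ℂ) ^ ((par p.2.1 + par q.2.1) * (par p.1 + par q.1))
        * sMul2 par (tmat 1 (sl2 C p.2.1 q.2.1)) A (p.1, p.2.2) (q.1, q.2.2) := by
  simp only [sMul3, sMul2, emb12, emb13, emb23, tmat, sl1, sl2, Matrix.of_apply,
    Matrix.one_apply, mul_ite, ite_mul, mul_one, one_mul, mul_zero, zero_mul,
    Finset.sum_ite_irrel, Finset.sum_const_zero, Finset.sum_ite_eq, Finset.sum_ite_eq',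
    Finset.mem_univ, if_true, Prod.mk.eta, Finset.mul_sum]
  refine Finset.sum_congr rfl fun x _ => ?_
  exact sign_merge _ _ (mod2_of_zmod (by push_cast; exact zh_T2d _ _ _ _ _ _))

end TL
end CYBEaux
namespace CYBEaux
set_option linter.unusedSectionVars false
set_option maxHeartbeats 1000000
open Matrix
variable {ι : Type*} [Fintype ι] [DecidableEq ι] (par : ι → ℕ)

lemma zh_P1 : ∀ a b e : ZMod 2, (a + b) * (e + e) = 0 := by decide
lemma zh_P4 : ∀ a e f : ZMod 2, (a + a) * (e + f) = 0 := by decide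

/-- (X ⊗ 1) · Z -/
lemma P1 (X : Matrix ι ι ℂ) (Z : Matrix (ι × ι) (ι × ι) ℂ) (p q : ι × ι) :
    sMul2 par (tmat X 1) Z p q = ∑ k : ι, X p.1 k * Z (k, p.2) q := by
  simp only [sMul2, tmat, Matrix.of_apply, Matrix.one_apply, mul_ite, ite_mul, mul_one,
    one_mul, mul_zero, zero_mul, Finset.sum_ite_irrel, Finset.sum_const_zero,
    Finset.sum_ite_eq, Finset.sum_ite_eq', Finset.mem_univ, if_true, Prod.mk.eta]
  refine Finset.sum_congr rfl fun k _ => ?_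
  rw [m1p _ 0 (mod2_of_zmod (by push_cast; exact zh_P1 _ _ _))]
  simp

/-- Z · (X ⊗ 1) -/
lemma P2 (X : Matrix ι ι ℂ) (Z : Matrix (ι × ι) (ι × ι) ℂ) (p q : ι × ι) :
    sMul2 par Z (tmat X 1) p q
      = ∑ k : ι, (-1 : ℂ) ^ ((par k + par q.1) * (par p.2 + par q.2))
          * Z p (k, q.2) * X k q.1 := by
  simp only [sMul2, tmat, Matrix.of_apply, Matrix.one_apply, mul_ite, ite_mul, mul_one,
    one_mul, mul_zero, zero_mul, Finset.sum_ite_irrel, Finset.sum_const_zero,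
    Finset.sum_ite_eq, Finset.sum_ite_eq', Finset.mem_univ, if_true, Prod.mk.eta]

/-- (1 ⊗ X) · Z -/
lemma P3 (X : Matrix ι ι ℂ) (Z : Matrix (ι × ι) (ι × ι) ℂ) (p q : ι × ι) :
    sMul2 par (tmat 1 X) Z p q
      = ∑ l : ι, (-1 : ℂ) ^ ((par p.1 + par q.1) * (par p.2 + par l))
          * X p.2 l * Z (p.1, l) q := by
  simp only [sMul2, tmat, Matrix.of_apply, Matrix.one_apply, mul_ite, ite_mul, mul_one,
    one_mul, mul_zero, zero_mul, Finset.sum_ite_irrel, Finset.sum_const_zero,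
    Finset.sum_ite_eq, Finset.sum_ite_eq', Finset.mem_univ, if_true, Prod.mk.eta]

/-- Z · (1 ⊗ X) -/
lemma P4 (X : Matrix ι ι ℂ) (Z : Matrix (ι × ι) (ι × ι) ℂ) (p q : ι × ι) :
    sMul2 par Z (tmat 1 X) p q = ∑ l : ι, Z p (q.1, l) * X l q.2 := by
  simp only [sMul2, tmat, Matrix.of_apply, Matrix.one_apply, mul_ite, ite_mul, mul_one,
    one_mul, mul_zero, zero_mul, Finset.sum_ite_irrel, Finset.sum_const_zero,
    Finset.sum_ite_eq, Finset.sum_ite_eq', Finset.mem_univ, if_true, Prod.mk.eta]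
  refine Finset.sum_congr rfl fun l _ => ?_
  rw [m1p _ 0 (mod2_of_zmod (by push_cast; exact zh_P4 _ _ _))]
  simp

lemma epsMat_sq : epsMat (ι := ι) par * epsMat par = 1 := by
  ext i j
  simp only [epsMat, Matrix.diagonal_mul_diagonal, ← pow_add, Matrix.one_apply,
    Matrix.diagonal_apply]
  rw [m1p (par i + par i) 0 (by omega)]
  simp

lemma eps_conj_eps (X : Matrix ι ι ℂ) :
    epsMat par * (epsMat par * X * epsMat par) * epsMat par = X := by
  calc epsMat par * (epsMat par * X * epsMat par) * epsMat par
      = (epsMat par * epsMat par) * X * (epsMat par * epsMat par) := by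
        noncomm_ring
    _ = X := by rw [epsMat_sq]; simp

lemma eps_conj_of_Hp {m : ℕ} {Sm : Matrix ι ι ℂ} (hS : Hp par m Sm) :
    epsMat par * Sm * epsMat par = ((-1 : ℂ)) ^ m • Sm := by
  rw [← cE_odd par 1 rfl Sm]
  exact (Hp_cE_iff par m Sm).mp hS

lemma bracketE {m : ℕ} {Sm : Matrix ι ι ℂ} (hS : Hp par m Sm) (X : Matrix ι ι ℂ) :
    sbr par (cE par m X) Sm = cE par m X * Sm - Sm * X := by
  rcases Nat.mod_two_eq_zero_or_one m with hm | hm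
  · rw [cE_even par m hm]
    have hodd : oddPart par Sm = 0 := by
      rw [oddPart, eps_conj_of_Hp par hS]
      have : ((-1 : ℂ)) ^ m = 1 := by rw [m1p m 0 (by omega)]; rfl
      rw [this, one_smul, sub_self, smul_zero]
    rw [sbr, hodd, Matrix.zero_mul, smul_zero, add_zero]
  · rw [cE_odd par m hm]
    have hms : ((-1 : ℂ)) ^ m = -1 := by rw [m1p m 1 (by omega), pow_one]
    have hodd : oddPart par Sm = Sm := by
      rw [oddPart, eps_conj_of_Hp par hS, hms]
      rw [neg_one_smul, sub_neg_eq_add]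
      rw [smul_add]
      rw [← add_smul]
      norm_num
    have hoddX : oddPart par (epsMat par * X * epsMat par)
        = (2⁻¹ : ℂ) • (epsMat par * X * epsMat par - X) := by
      rw [oddPart, eps_conj_eps]
    rw [sbr, hodd, hoddX]
    rw [Matrix.mul_smul, smul_smul]
    norm_num
    rw [Matrix.mul_sub]
    noncomm_ring

/-- raw second-factor multiplication formula -/
lemma D_mat (X : Matrix ι ι ℂ) (W : Matrix (ι × ι) (ι × ι) ℂ) (p1 q1 : ι) :
    sl2 (sMul2 par (tmat 1 X) W - sMul2 par W (tmat 1 X)) p1 q1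
      = cE par (par p1 + par q1) X * sl2 W p1 q1 - sl2 W p1 q1 * X := by
  ext j l
  have h1 := P3 par X W (p1, j) (q1, l)
  have h2 := P4 par X W (p1, j) (q1, l)
  simp only [sl2, Matrix.of_apply, Matrix.sub_apply, h1, h2, Matrix.mul_apply, cE]

end CYBEaux
namespace CYBEaux
set_option linter.unusedSectionVars false
set_option maxHeartbeats 1000000
open Matrix
variable {ι : Type*} [Fintype ι] [DecidableEq ι] (par : ι → ℕ)

lemma sMul2_add_left (Z W V : Matrix (ι × ι) (ι × ι) ℂ) :
    sMul2 par (Z + W) V = sMul2 par Z V + sMul2 par W V := by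
  ext p q
  simp only [sMul2, Matrix.of_apply, Matrix.add_apply, ← Finset.sum_add_distrib]
  refine Finset.sum_congr rfl fun k _ => Finset.sum_congr rfl fun l _ => by ring

lemma sMul2_add_right (Z W V : Matrix (ι × ι) (ι × ι) ℂ) :
    sMul2 par V (Z + W) = sMul2 par V Z + sMul2 par V W := by
  ext p q
  simp only [sMul2, Matrix.of_apply, Matrix.add_apply, ← Finset.sum_add_distrib]
  refine Finset.sum_congr rfl fun k _ => Finset.sum_congr rfl fun l _ => by ring

lemma sMul2_zero_left (V : Matrix (ι × ι) (ι × ι) ℂ) : sMul2 par 0 V = 0 := by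
  ext p q
  simp [sMul2]

lemma oddPart2_of_Ev2 {W : Matrix (ι × ι) (ι × ι) ℂ} (h : Ev2 par W) :
    oddPart2 par W = 0 := by
  ext p q
  simp only [oddPart2, Matrix.of_apply, Matrix.zero_apply]
  split_ifs with hc
  · exact h p q hc
  · rfl

lemma sbr2_even_right {W : Matrix (ι × ι) (ι × ι) ℂ} (h : Ev2 par W)
    (T : Matrix (ι × ι) (ι × ι) ℂ) :
    sbr2 par T W = sMul2 par T W - sMul2 par W T := by
  rw [sbr2, oddPart2_of_Ev2 par h, sMul2_zero_left, smul_zero, add_zero]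

/-- idT is additive -/
lemma idT_sub (f : Matrix ι ι ℂ → Matrix ι ι ℂ)
    (hf : ∀ M N : Matrix ι ι ℂ, f (M - N) = f M - f N)
    (Z W : Matrix (ι × ι) (ι × ι) ℂ) :
    idT f (Z - W) = idT f Z - idT f W := by
  ext p q
  have h : sl2 (Z - W) p.1 q.1 = sl2 Z p.1 q.1 - sl2 W p.1 q.1 := by
    ext j l; simp [sl2]
  rw [idT_apply, h, hf]
  simp only [Matrix.sub_apply]
  rw [idT_apply, idT_apply]

lemma ωit_sub (ω : Matrix ι ι ℂ →ₗ[ℂ] Matrix ι ι ℂ) (m : ℕ) (M N : Matrix ι ι ℂ) :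
    (⇑ω)^[m] (M - N) = (⇑ω)^[m] M - (⇑ω)^[m] N := by
  rw [← Module.End.pow_apply, ← Module.End.pow_apply, ← Module.End.pow_apply, map_sub]

lemma ωit_add (ω : Matrix ι ι ℂ →ₗ[ℂ] Matrix ι ι ℂ) (m : ℕ) (M N : Matrix ι ι ℂ) :
    (⇑ω)^[m] (M + N) = (⇑ω)^[m] M + (⇑ω)^[m] N := by
  rw [← Module.End.pow_apply, ← Module.End.pow_apply, ← Module.End.pow_apply, map_add]

lemma idT_add (f : Matrix ι ι ℂ → Matrix ι ι ℂ)
    (hf : ∀ M N : Matrix ι ι ℂ, f (M + N) = f M + f N)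
    (Z W : Matrix (ι × ι) (ι × ι) ℂ) :
    idT f (Z + W) = idT f Z + idT f W := by
  ext p q
  have h : sl2 (Z + W) p.1 q.1 = sl2 Z p.1 q.1 + sl2 W p.1 q.1 := by
    ext j l; simp [sl2]
  rw [idT_apply, h, hf]
  simp only [Matrix.add_apply]
  rw [idT_apply, idT_apply]

lemma idT_zero_lin (ω : Matrix ι ι ℂ →ₗ[ℂ] Matrix ι ι ℂ) (m : ℕ) :
    idT ((⇑ω)^[m]) (0 : Matrix (ι × ι) (ι × ι) ℂ) = 0 := by
  ext p q
  rw [idT_apply]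
  have h : sl2 (0 : Matrix (ι × ι) (ι × ι) ℂ) p.1 q.1 = 0 := by ext j l; simp [sl2]
  rw [h, ← Module.End.pow_apply, map_zero]
  rfl

namespace Setup

variable (S : Setup ι)

/-- (X⊗1)·(id⊗ωᵃ)K = (id⊗ωᵃ)((X⊗1)·K) -/
lemma i1 (X : Matrix ι ι ℂ) (a : ℕ) :
    sMul2 S.par (tmat X 1) (S.KK a) = idT ((⇑S.ω)^[a]) (sMul2 S.par (tmat X 1) S.K) := by
  ext p q
  rw [P1, idT_apply]
  have hsl : sl2 (sMul2 S.par (tmat X 1) S.K) p.1 q.1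
      = ∑ k : ι, X p.1 k • sl2 S.K k q.1 := by
    ext j l
    simp only [sl2, Matrix.of_apply, Matrix.sum_apply, Matrix.smul_apply, smul_eq_mul]
    rw [P1]
  rw [hsl, ← S.coe_pow a, map_sum]
  simp only [_root_.map_smul, Matrix.sum_apply, Matrix.smul_apply, smul_eq_mul]
  refine Finset.sum_congr rfl fun k _ => ?_
  rw [KK_apply, S.coe_pow a]

/-- (id⊗ωᵃ)K·(X⊗1) = (id⊗ωᵃ)(K·(X⊗1)) -/
lemma i2 (X : Matrix ι ι ℂ) (a : ℕ) :
    sMul2 S.par (S.KK a) (tmat X 1) = idT ((⇑S.ω)^[a]) (sMul2 S.par S.K (tmat X 1)) := by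
  ext p q
  rw [P2, idT_apply]
  have hsl : sl2 (sMul2 S.par S.K (tmat X 1)) p.1 q.1
      = ∑ k : ι, X k q.1 • cE S.par (S.par k + S.par q.1) (sl2 S.K p.1 k) := by
    ext j l
    simp only [sl2, Matrix.of_apply, Matrix.sum_apply, Matrix.smul_apply, smul_eq_mul, cE]
    rw [P2]
    refine Finset.sum_congr rfl fun k _ => by ring
  rw [hsl, ← S.coe_pow a, map_sum]
  simp only [_root_.map_smul, Matrix.sum_apply, Matrix.smul_apply, smul_eq_mul]
  refine Finset.sum_congr rfl fun k _ => ?_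
  rw [S.coe_pow a,
    ωit_cE S.par S.L S.ω S.hω_mem S.hω_par a _ _ (S.sl2_mem p.1 k)]
  have : (cE S.par (S.par k + S.par q.1) ((⇑S.ω)^[a] (sl2 S.K p.1 k))) p.2 q.2
      = (-1 : ℂ) ^ ((S.par k + S.par q.1) * (S.par p.2 + S.par q.2))
        * ((⇑S.ω)^[a] (sl2 S.K p.1 k)) p.2 q.2 := rfl
  rw [this, KK_apply]
  ring

/-- the key invariance identity, twisted by ωᵃ -/
lemma Inv (a : ℕ) (X : Matrix ι ι ℂ) (hX : X ∈ S.L) :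
    sbr2 S.par (tmat X 1 + tmat 1 ((⇑S.ω)^[a] X)) (S.KK a) = 0 := by
  have hKa : Ev2 S.par (S.KK a) := S.Ev2_KK a
  rw [sbr2_even_right S.par hKa, sMul2_add_left, sMul2_add_right]
  have key2 : sMul2 S.par (tmat 1 ((⇑S.ω)^[a] X)) (S.KK a)
      - sMul2 S.par (S.KK a) (tmat 1 ((⇑S.ω)^[a] X))
      = idT ((⇑S.ω)^[a]) (sMul2 S.par (tmat 1 X) S.K - sMul2 S.par S.K (tmat 1 X)) := by
    ext p q
    have lhs : (sMul2 S.par (tmat 1 ((⇑S.ω)^[a] X)) (S.KK a)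
        - sMul2 S.par (S.KK a) (tmat 1 ((⇑S.ω)^[a] X))) p q
        = (cE S.par (S.par p.1 + S.par q.1) ((⇑S.ω)^[a] X) * sl2 (S.KK a) p.1 q.1
          - sl2 (S.KK a) p.1 q.1 * ((⇑S.ω)^[a] X)) p.2 q.2 := by
      rw [← D_mat]; rfl
    rw [lhs, idT_apply, D_mat]
    set m := S.par p.1 + S.par q.1
    have hsl : sl2 (S.KK a) p.1 q.1 = (⇑S.ω)^[a] (sl2 S.K p.1 q.1) := rfl
    have hHp0 : Hp S.par m (sl2 S.K p.1 q.1) := S.Hp_sl2 p.1 q.1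
    have hHpa : Hp S.par m ((⇑S.ω)^[a] (sl2 S.K p.1 q.1)) :=
      ωit_Hp S.par S.L S.ω S.hω_mem S.hω_par a m _ (S.sl2_mem p.1 q.1) hHp0
    rw [hsl, ← bracketE S.par hHpa,
      ← ωit_cE S.par S.L S.ω S.hω_mem S.hω_par a m X hX,
      ← ωit_lie S.par S.L S.ω S.hω_mem S.hω_lie a _
        (cE_mem S.par S.L S.hL_graded m X hX) _ (S.sl2_mem p.1 q.1),
      bracketE S.par hHp0]
  have hA : sMul2 S.par (tmat X 1) (S.KK a) - sMul2 S.par (S.KK a) (tmat X 1)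
      = idT ((⇑S.ω)^[a]) (sMul2 S.par (tmat X 1) S.K - sMul2 S.par S.K (tmat X 1)) := by
    rw [S.i1 X a, S.i2 X a, idT_sub _ (ωit_sub S.ω a)]
  have hsum : (sMul2 S.par (tmat X 1) S.K - sMul2 S.par S.K (tmat X 1))
      + (sMul2 S.par (tmat 1 X) S.K - sMul2 S.par S.K (tmat 1 X)) = 0 := by
    have h0 := S.hK_inv X hX
    rw [sbr2_even_right S.par S.hK_even, sMul2_add_left, sMul2_add_right] at h0
    calc (sMul2 S.par (tmat X 1) S.K - sMul2 S.par S.K (tmat X 1))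
        + (sMul2 S.par (tmat 1 X) S.K - sMul2 S.par S.K (tmat 1 X))
        = sMul2 S.par (tmat X 1) S.K + sMul2 S.par (tmat 1 X) S.K
          - (sMul2 S.par S.K (tmat X 1) + sMul2 S.par S.K (tmat 1 X)) := by abel
      _ = 0 := h0
  calc sMul2 S.par (tmat X 1) (S.KK a) + sMul2 S.par (tmat 1 ((⇑S.ω)^[a] X)) (S.KK a)
        - (sMul2 S.par (S.KK a) (tmat X 1) + sMul2 S.par (S.KK a) (tmat 1 ((⇑S.ω)^[a] X)))
      = (sMul2 S.par (tmat X 1) (S.KK a) - sMul2 S.par (S.KK a) (tmat X 1))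
        + (sMul2 S.par (tmat 1 ((⇑S.ω)^[a] X)) (S.KK a)
          - sMul2 S.par (S.KK a) (tmat 1 ((⇑S.ω)^[a] X))) := by abel
    _ = idT ((⇑S.ω)^[a]) (sMul2 S.par (tmat X 1) S.K - sMul2 S.par S.K (tmat X 1))
        + idT ((⇑S.ω)^[a]) (sMul2 S.par (tmat 1 X) S.K - sMul2 S.par S.K (tmat 1 X)) := by
        rw [hA, key2]
    _ = idT ((⇑S.ω)^[a]) ((sMul2 S.par (tmat X 1) S.K - sMul2 S.par S.K (tmat X 1))
        + (sMul2 S.par (tmat 1 X) S.K - sMul2 S.par S.K (tmat 1 X))) :=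
        (idT_add _ (ωit_add S.ω a) _ _).symm
    _ = 0 := by rw [hsum, idT_zero_lin]

end Setup
end CYBEaux
namespace CYBEaux
set_option linter.unusedSectionVars false
set_option maxHeartbeats 1000000
open Matrix
variable {ι : Type*} [Fintype ι] [DecidableEq ι] (par : ι → ℕ)

def Ev3 (Z : Matrix (ι × ι × ι) (ι × ι × ι) ℂ) : Prop :=
  ∀ p q : ι × ι × ι,
    (par p.1 + par p.2.1 + par p.2.2 + par q.1 + par q.2.1 + par q.2.2) % 2 = 1 → Z p q = 0

lemma sMul3_add_right (Z W V : Matrix (ι × ι × ι) (ι × ι × ι) ℂ) :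
    sMul3 par Z (W + V) = sMul3 par Z W + sMul3 par Z V := by
  ext p q
  simp only [sMul3, Matrix.of_apply, Matrix.add_apply, ← Finset.sum_add_distrib]
  exact Finset.sum_congr rfl fun a _ => Finset.sum_congr rfl fun b _ =>
    Finset.sum_congr rfl fun c _ => by ring

lemma sMul3_add_left (Z W V : Matrix (ι × ι × ι) (ι × ι × ι) ℂ) :
    sMul3 par (Z + W) V = sMul3 par Z V + sMul3 par W V := by
  ext p q
  simp only [sMul3, Matrix.of_apply, Matrix.add_apply, ← Finset.sum_add_distrib]
  exact Finset.sum_congr rfl fun a _ => Finset.sum_congr rfl fun b _ =>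
    Finset.sum_congr rfl fun c _ => by ring

lemma sMul3_zero_left (V : Matrix (ι × ι × ι) (ι × ι × ι) ℂ) : sMul3 par 0 V = 0 := by
  ext p q; simp [sMul3]

lemma sMul3_zero_right (V : Matrix (ι × ι × ι) (ι × ι × ι) ℂ) : sMul3 par V 0 = 0 := by
  ext p q; simp [sMul3]

lemma sMul3_smul_left (c : ℂ) (Z V : Matrix (ι × ι × ι) (ι × ι × ι) ℂ) :
    sMul3 par (c • Z) V = c • sMul3 par Z V := by
  ext p q
  simp only [sMul3, Matrix.of_apply, Matrix.smul_apply, smul_eq_mul, Finset.mul_sum]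
  exact Finset.sum_congr rfl fun a _ => Finset.sum_congr rfl fun b _ =>
    Finset.sum_congr rfl fun c' _ => by ring

lemma sMul3_smul_right (c : ℂ) (Z V : Matrix (ι × ι × ι) (ι × ι × ι) ℂ) :
    sMul3 par V (c • Z) = c • sMul3 par V Z := by
  ext p q
  simp only [sMul3, Matrix.of_apply, Matrix.smul_apply, smul_eq_mul, Finset.mul_sum]
  exact Finset.sum_congr rfl fun a _ => Finset.sum_congr rfl fun b _ =>
    Finset.sum_congr rfl fun c' _ => by ring

lemma oddPart3_add (Z W : Matrix (ι × ι × ι) (ι × ι × ι) ℂ) :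
    oddPart3 par (Z + W) = oddPart3 par Z + oddPart3 par W := by
  ext p q
  simp only [oddPart3, Matrix.of_apply, Matrix.add_apply]
  split_ifs <;> simp

lemma oddPart3_smul (c : ℂ) (Z : Matrix (ι × ι × ι) (ι × ι × ι) ℂ) :
    oddPart3 par (c • Z) = c • oddPart3 par Z := by
  ext p q
  simp only [oddPart3, Matrix.of_apply, Matrix.smul_apply]
  split_ifs <;> simp

lemma oddPart3_of_Ev3 {Z : Matrix (ι × ι × ι) (ι × ι × ι) ℂ} (h : Ev3 par Z) :
    oddPart3 par Z = 0 := by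
  ext p q
  simp only [oddPart3, Matrix.of_apply, Matrix.zero_apply]
  split_ifs with hc
  · exact h p q hc
  · rfl

lemma Ev3_emb12 {Z : Matrix (ι × ι) (ι × ι) ℂ} (h : Ev2 par Z) : Ev3 par (emb12 Z) := by
  intro p q hpq
  simp only [emb12, Matrix.of_apply]
  by_cases he : p.2.2 = q.2.2
  · rw [if_pos he]
    rw [h (p.1, p.2.1) (q.1, q.2.1)
      (show (par p.1 + par p.2.1 + par q.1 + par q.2.1) % 2 = 1 by
        rw [he] at hpq; omega)]
    ring
  · rw [if_neg he]; ring

lemma Ev3_emb13 {Z : Matrix (ι × ι) (ι × ι) ℂ} (h : Ev2 par Z) : Ev3 par (emb13 Z) := by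
  intro p q hpq
  simp only [emb13, Matrix.of_apply]
  by_cases he : p.2.1 = q.2.1
  · rw [if_pos he]
    rw [h (p.1, p.2.2) (q.1, q.2.2)
      (show (par p.1 + par p.2.2 + par q.1 + par q.2.2) % 2 = 1 by
        rw [he] at hpq; omega)]
    ring
  · rw [if_neg he]; ring

lemma Ev3_emb23 {Z : Matrix (ι × ι) (ι × ι) ℂ} (h : Ev2 par Z) : Ev3 par (emb23 Z) := by
  intro p q hpq
  simp only [emb23, Matrix.of_apply]
  by_cases he : p.1 = q.1
  · rw [if_pos he]
    rw [h p.2 q.2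
      (show (par p.2.1 + par p.2.2 + par q.2.1 + par q.2.2) % 2 = 1 by
        rw [he] at hpq; omega)]
    ring
  · rw [if_neg he]; ring

lemma sbr3_of_oddW {Z W : Matrix (ι × ι × ι) (ι × ι × ι) ℂ}
    (hW : oddPart3 par W = 0) :
    sbr3 par Z W = sMul3 par Z W - sMul3 par W Z := by
  rw [sbr3, hW, sMul3_zero_left, smul_zero, add_zero]

lemma sbr3_antisymm {Z W : Matrix (ι × ι × ι) (ι × ι × ι) ℂ}
    (hZ : oddPart3 par Z = 0) (hW : oddPart3 par W = 0) :
    sbr3 par Z W = - sbr3 par W Z := by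
  rw [sbr3, sbr3, hZ, hW, sMul3_zero_left]
  simp only [smul_zero, add_zero]
  abel

lemma tmat_smul_left (c : ℂ) (X Y : Matrix ι ι ℂ) :
    tmat (c • X) Y = c • tmat X Y := by
  ext p q; simp [tmat, Matrix.smul_apply]; ring

lemma tmat_smul_right (c : ℂ) (X Y : Matrix ι ι ℂ) :
    tmat X (c • Y) = c • tmat X Y := by
  ext p q; simp [tmat, Matrix.smul_apply]; ring

lemma sMul2_smul_left (c : ℂ) (Z V : Matrix (ι × ι) (ι × ι) ℂ) :
    sMul2 par (c • Z) V = c • sMul2 par Z V := by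
  ext p q
  simp only [sMul2, Matrix.of_apply, Matrix.smul_apply, smul_eq_mul, Finset.mul_sum]
  exact Finset.sum_congr rfl fun a _ => Finset.sum_congr rfl fun b _ => by ring

lemma sMul2_smul_right (c : ℂ) (Z V : Matrix (ι × ι) (ι × ι) ℂ) :
    sMul2 par V (c • Z) = c • sMul2 par V Z := by
  ext p q
  simp only [sMul2, Matrix.of_apply, Matrix.smul_apply, smul_eq_mul, Finset.mul_sum]
  exact Finset.sum_congr rfl fun a _ => Finset.sum_congr rfl fun b _ => by ring

namespace Setup

variable (S : Setup ι)

/-- Master identity E1 -/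
lemma E1 (a e : ℕ) :
    sbr3 S.par (emb12 (S.KK a)) (emb13 (S.tK e) + emb23 (S.tK (a + e))) = 0 := by
  have hA := S.Ev2_KK a
  have hB := S.Ev2_tK e
  have hC := S.Ev2_tK (a + e)
  have hodd : oddPart3 S.par (emb13 (S.tK e) + emb23 (S.tK (a + e))) = 0 := by
    rw [oddPart3_add, oddPart3_of_Ev3 S.par (Ev3_emb13 S.par hB),
      oddPart3_of_Ev3 S.par (Ev3_emb23 S.par hC), add_zero]
  rw [sbr3_of_oddW S.par hodd, sMul3_add_right, sMul3_add_left]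
  ext p q
  simp only [Matrix.sub_apply, Matrix.add_apply, Matrix.zero_apply]
  rw [T1a S.par p q (S.KK a) (S.tK e), T1c S.par p q (S.KK a) (S.tK (a + e)),
    T1b S.par p q hA (S.tK e), T1d S.par p q hA (S.tK (a + e))]
  set X := (⇑S.ω)^[e] (sl1 S.K p.2.2 q.2.2) with hX
  have hM : sl1 (S.tK e) p.2.2 q.2.2 = X := rfl
  have hN : sl1 (S.tK (a + e)) p.2.2 q.2.2 = (⇑S.ω)^[a] X := by
    rw [hX, ← Function.iterate_add_apply]; rfl
  have hXL : X ∈ S.L := ωit_mem S.L S.ω S.hω_mem e _ (S.sl1_mem p.2.2 q.2.2)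
  have hinv := S.Inv a X hXL
  rw [sbr2_even_right S.par (S.Ev2_KK a), sMul2_add_left, sMul2_add_right] at hinv
  have hent := congrFun (congrFun hinv (p.1, p.2.1)) (q.1, q.2.1)
  simp only [Matrix.sub_apply, Matrix.add_apply, Matrix.zero_apply] at hent
  rw [hM, hN]
  linear_combination - hent

/-- Master identity E2 -/
lemma E2 (b e : ℕ) :
    sbr3 S.par (emb13 (S.KK b)) (emb12 (S.tK e) + emb23 (S.KK (b + e))) = 0 := by
  have hA := S.Ev2_KK b
  have hB := S.Ev2_tK e
  have hC := S.Ev2_KK (b + e)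
  have hodd : oddPart3 S.par (emb12 (S.tK e) + emb23 (S.KK (b + e))) = 0 := by
    rw [oddPart3_add, oddPart3_of_Ev3 S.par (Ev3_emb12 S.par hB),
      oddPart3_of_Ev3 S.par (Ev3_emb23 S.par hC), add_zero]
  rw [sbr3_of_oddW S.par hodd, sMul3_add_right, sMul3_add_left]
  ext p q
  simp only [Matrix.sub_apply, Matrix.add_apply, Matrix.zero_apply]
  rw [T2a S.par p q hA hB, T2b S.par p q hA hB, T2c S.par p q hA (S.KK (b + e)),
    T2d S.par p q (S.KK b) (S.KK (b + e))]
  set st := S.par p.2.1 + S.par q.2.1 with hst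
  set ii := S.par p.1 + S.par q.1 with hii
  set Y := sl1 S.K p.2.1 q.2.1 with hY
  set X := ((-1 : ℂ)) ^ st • (⇑S.ω)^[e] Y with hXdef
  have hM : sl1 (S.tK e) p.2.1 q.2.1 = (⇑S.ω)^[e] Y := rfl
  have hN : sl2 (S.KK (b + e)) p.2.1 q.2.1 = (⇑S.ω)^[b] X := by
    have h1 : sl2 (S.KK (b + e)) p.2.1 q.2.1 = (⇑S.ω)^[b + e] (sl2 S.K p.2.1 q.2.1) := rfl
    rw [h1, S.sl2_eq_smul_sl1, ωit_smul S.ω, hXdef, ωit_smul S.ω,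
      ← Function.iterate_add_apply]
  have hXL : X ∈ S.L :=
    Submodule.smul_mem _ _ (ωit_mem S.L S.ω S.hω_mem e _ (S.sl1_mem p.2.1 q.2.1))
  have hinv := S.Inv b X hXL
  rw [sbr2_even_right S.par (S.Ev2_KK b), sMul2_add_left, sMul2_add_right] at hinv
  rw [hXdef, tmat_smul_left, sMul2_smul_left, sMul2_smul_right] at hinv
  have hent := congrFun (congrFun hinv (p.1, p.2.2)) (q.1, q.2.2)
  simp only [Matrix.sub_apply, Matrix.add_apply, Matrix.zero_apply,
    Matrix.smul_apply, smul_eq_mul] at hent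
  rw [hM, hN, hXdef, ωit_smul S.ω]
  have hp : ((-1 : ℂ)) ^ (st * (ii + 1)) = (-1) ^ (st * ii) * (-1) ^ st := by
    have h' : st * (ii + 1) = st * ii + st := by ring
    rw [h', pow_add]
  rw [hp]
  have hw : (⇑S.ω)^[b] ((-1 : ℂ) ^ st • (⇑S.ω)^[e] Y)
      = (-1 : ℂ) ^ st • (⇑S.ω)^[b] ((⇑S.ω)^[e] Y) := ωit_smul S.ω b _ _
  rw [hw, tmat_smul_right, sMul2_smul_right, sMul2_smul_left] at hent
  simp only [Matrix.smul_apply, smul_eq_mul] at hent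
  rw [tmat_smul_right, sMul2_smul_right, sMul2_smul_left]
  simp only [Matrix.smul_apply, smul_eq_mul]
  linear_combination (-((-1 : ℂ) ^ (st * ii))) * hent

end Setup
end CYBEaux
namespace CYBEaux
set_option linter.unusedSectionVars false
set_option maxHeartbeats 1000000
open Matrix
variable {ι : Type*} [Fintype ι] [DecidableEq ι] (par : ι → ℕ)

lemma mod_lemma1 {n : ℕ} (hn : 0 < n) {a b : ℕ} (ha : a < n) (hb : b < n) :
    ((b + (n - a)) % n + a) % n = b := by
  rw [Nat.mod_add_mod, show b + (n - a) + a = b + n by omega, Nat.add_mod_right,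
    Nat.mod_eq_of_lt hb]

lemma mod_lemma2 {n : ℕ} (hn : 0 < n) {b c : ℕ} (hb : b < n) (hc : c < n) :
    (b + n - (b + n - c) % n) % n = c := by
  rcases le_or_gt c b with h | h
  · rw [show b + n - c = (b - c) + n by omega, Nat.add_mod_right,
      Nat.mod_eq_of_lt (show b - c < n by omega),
      show b + n - (b - c) = c + n by omega, Nat.add_mod_right, Nat.mod_eq_of_lt hc]
  · rw [Nat.mod_eq_of_lt (show b + n - c < n by omega),
      show b + n - (b + n - c) = c by omega, Nat.mod_eq_of_lt hc]

section Sums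
variable {M : Type*} [AddCommGroup M]

lemma sum_step (n : ℕ) (g : ℕ → M) (hg : ∀ x, g (x + n) = g x) :
    ∑ b ∈ Finset.range n, g (b + 1) = ∑ b ∈ Finset.range n, g b := by
  have h1 := Finset.sum_range_succ' (fun i => g i) n
  have h2 := Finset.sum_range_succ (fun i => g i) n
  have h3 : g n = g 0 := by simpa using hg 0
  have h4 : (∑ i ∈ Finset.range n, g (i + 1)) + g 0
      = (∑ i ∈ Finset.range n, g i) + g 0 := by
    rw [← h1, h2, h3]
  exact add_right_cancel h4

lemma sum_shift_periodic (n : ℕ) :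
    ∀ (k : ℕ) (f : ℕ → M), (∀ x, f (x + n) = f x) →
      ∑ b ∈ Finset.range n, f (b + k) = ∑ b ∈ Finset.range n, f b := by
  intro k
  induction k with
  | zero => intro f _; simp
  | succ m ih =>
      intro f hf
      have h1 : ∀ b, f (b + (m + 1)) = (fun x => f (x + 1)) (b + m) := fun b => rfl
      calc ∑ b ∈ Finset.range n, f (b + (m + 1))
          = ∑ b ∈ Finset.range n, (fun x => f (x + 1)) (b + m) :=
            Finset.sum_congr rfl fun b _ => h1 b
        _ = ∑ b ∈ Finset.range n, f (b + 1) := by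
            refine ih (fun x => f (x + 1)) fun x => ?_
            show f (x + n + 1) = f (x + 1)
            rw [show x + n + 1 = (x + 1) + n by ring, hf]
        _ = ∑ b ∈ Finset.range n, f b := sum_step n f hf

lemma sum_mod_shift (n : ℕ) (F : ℕ → M) (k : ℕ) :
    ∑ b ∈ Finset.range n, F ((b + k) % n) = ∑ b ∈ Finset.range n, F (b % n) := by
  refine sum_shift_periodic n k (fun x => F (x % n)) fun x => ?_
  show F ((x + n) % n) = F (x % n)
  rw [Nat.add_mod_right]

lemma sum_reflect_mod (n : ℕ) (F : ℕ → M) (b : ℕ) :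
    ∑ c ∈ Finset.range n, F ((b + n - c) % n) = ∑ c ∈ Finset.range n, F (c % n) := by
  have h := Finset.sum_range_reflect (fun j => F ((b + n - j) % n)) n
  rw [← h]
  have h2 : ∀ j ∈ Finset.range n,
      F ((b + n - (n - 1 - j)) % n) = F ((j + (b + 1)) % n) := by
    intro j hj
    have hj' := Finset.mem_range.mp hj
    rw [show b + n - (n - 1 - j) = j + (b + 1) by omega]
  rw [Finset.sum_congr rfl h2]
  exact sum_mod_shift n F (b + 1)

end Sums

lemma emb12_smul (c : ℂ) (Z : Matrix (ι × ι) (ι × ι) ℂ) :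
    emb12 (c • Z) = c • emb12 Z := by
  ext p q; simp [emb12, Matrix.smul_apply]; try ring

lemma emb13_smul (c : ℂ) (Z : Matrix (ι × ι) (ι × ι) ℂ) :
    emb13 (c • Z) = c • emb13 Z := by
  ext p q; simp [emb13, Matrix.smul_apply]; try ring

lemma emb23_smul (c : ℂ) (Z : Matrix (ι × ι) (ι × ι) ℂ) :
    emb23 (c • Z) = c • emb23 Z := by
  ext p q; simp [emb23, Matrix.smul_apply]

lemma emb12_sum {s : Finset ℕ} (f : ℕ → Matrix (ι × ι) (ι × ι) ℂ) :
    emb12 (∑ i ∈ s, f i) = ∑ i ∈ s, emb12 (f i) := by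
  ext p q; simp [emb12, Matrix.sum_apply, Finset.sum_mul]

lemma emb13_sum {s : Finset ℕ} (f : ℕ → Matrix (ι × ι) (ι × ι) ℂ) :
    emb13 (∑ i ∈ s, f i) = ∑ i ∈ s, emb13 (f i) := by
  ext p q; simp [emb13, Matrix.sum_apply, Finset.sum_mul]

lemma emb23_sum {s : Finset ℕ} (f : ℕ → Matrix (ι × ι) (ι × ι) ℂ) :
    emb23 (∑ i ∈ s, f i) = ∑ i ∈ s, emb23 (f i) := by
  ext p q; simp [emb23, Matrix.sum_apply, Finset.mul_sum]

lemma oddPart3_zero : oddPart3 par (0 : Matrix (ι × ι × ι) (ι × ι × ι) ℂ) = 0 := by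
  ext p q; simp [oddPart3]

lemma sbr3_add_right (Z W V : Matrix (ι × ι × ι) (ι × ι × ι) ℂ) :
    sbr3 par Z (W + V) = sbr3 par Z W + sbr3 par Z V := by
  simp only [sbr3, oddPart3_add, sMul3_add_right, sMul3_add_left, smul_add]
  abel

lemma sbr3_add_left (Z W V : Matrix (ι × ι × ι) (ι × ι × ι) ℂ) :
    sbr3 par (Z + W) V = sbr3 par Z V + sbr3 par W V := by
  simp only [sbr3, oddPart3_add, sMul3_add_right, sMul3_add_left, smul_add]
  abel

lemma sbr3_smul_right (c : ℂ) (Z W : Matrix (ι × ι × ι) (ι × ι × ι) ℂ) :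
    sbr3 par Z (c • W) = c • sbr3 par Z W := by
  simp only [sbr3, oddPart3_smul, sMul3_smul_right, sMul3_smul_left, smul_sub, smul_add]
  rw [smul_comm (2 : ℂ) c]

lemma sbr3_smul_left (c : ℂ) (Z W : Matrix (ι × ι × ι) (ι × ι × ι) ℂ) :
    sbr3 par (c • Z) W = c • sbr3 par Z W := by
  simp only [sbr3, oddPart3_smul, sMul3_smul_right, sMul3_smul_left, smul_sub, smul_add]
  rw [smul_comm (2 : ℂ) c]

lemma sbr3_zero_right (Z : Matrix (ι × ι × ι) (ι × ι × ι) ℂ) : sbr3 par Z 0 = 0 := by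
  simp [sbr3, oddPart3_zero, sMul3_zero_left, sMul3_zero_right]

lemma sbr3_sum_right (Z : Matrix (ι × ι × ι) (ι × ι × ι) ℂ) (s : Finset ℕ)
    (f : ℕ → Matrix (ι × ι × ι) (ι × ι × ι) ℂ) :
    sbr3 par Z (∑ i ∈ s, f i) = ∑ i ∈ s, sbr3 par Z (f i) := by
  classical
  induction s using Finset.induction_on with
  | empty => simp [sbr3_zero_right]
  | insert _ _ hni ih =>
      rw [Finset.sum_insert hni, Finset.sum_insert hni, sbr3_add_right, ih]

lemma sbr3_zero_left (Z : Matrix (ι × ι × ι) (ι × ι × ι) ℂ) : sbr3 par 0 Z = 0 := by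
  simp [sbr3, oddPart3_zero, sMul3_zero_left, sMul3_zero_right]

lemma sbr3_sum_left (Z : Matrix (ι × ι × ι) (ι × ι × ι) ℂ) (s : Finset ℕ)
    (f : ℕ → Matrix (ι × ι × ι) (ι × ι × ι) ℂ) :
    sbr3 par (∑ i ∈ s, f i) Z = ∑ i ∈ s, sbr3 par (f i) Z := by
  classical
  induction s using Finset.induction_on with
  | empty => simp [sbr3_zero_left]
  | insert _ _ hni ih =>
      rw [Finset.sum_insert hni, Finset.sum_insert hni, sbr3_add_left, ih]

end CYBEaux
namespace CYBEaux
set_option linter.unusedSectionVars false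
set_option maxHeartbeats 1000000
open Matrix
variable {ι : Type*} [Fintype ι] [DecidableEq ι]

namespace Setup
variable (S : Setup ι)

lemma zeta_pow_n : S.ζ ^ S.n = 1 := S.hζ.pow_eq_one

lemma KK_two_n : S.KK (2 * S.n) = S.K := by
  rw [show 2 * S.n = (0 + S.n) + S.n by ring, KK_add_n, KK_add_n]
  rfl

lemma KK_three_n : S.KK (3 * S.n) = S.K := by
  rw [show 3 * S.n = ((0 + S.n) + S.n) + S.n by ring, KK_add_n, KK_add_n, KK_add_n]
  rfl

lemma tK_eq_2n (b : ℕ) (hb : b < S.n) :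
    S.tK (2 * S.n - b) = S.ζ ^ (2 * S.n - b) • S.KK b := by
  have h := S.tK_KK (2 * S.n - b) b
  rw [show 2 * S.n - b + b = 2 * S.n by omega, KK_two_n] at h
  exact h

lemma tK_eq_3n (a b : ℕ) (ha : a < S.n) (hb : b < S.n) :
    S.tK (a + (2 * S.n - b)) = S.ζ ^ (a + (2 * S.n - b)) • S.KK (b + (S.n - a)) := by
  have h := S.tK_KK (a + (2 * S.n - b)) (b + (S.n - a))
  rw [show a + (2 * S.n - b) + (b + (S.n - a)) = 3 * S.n by omega, KK_three_n] at h
  exact h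

/-- relation R1 : [K_a^{12}, K_b^{13}] = -ζ^a [K_a^{12}, K_{b-a}^{23}] -/
lemma R1 (a b : ℕ) (ha : a < S.n) (hb : b < S.n) :
    sbr3 S.par (emb12 (S.KK a)) (emb13 (S.KK b))
      = (-(S.ζ ^ a)) • sbr3 S.par (emb12 (S.KK a))
          (emb23 (S.KK ((b + (S.n - a)) % S.n))) := by
  have hE := S.E1 a (2 * S.n - b)
  rw [S.tK_eq_2n b hb, S.tK_eq_3n a b ha hb, emb13_smul, emb23_smul, sbr3_add_right,
    sbr3_smul_right, sbr3_smul_right] at hE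
  have hE2 := congrArg (fun Z => S.ζ ^ b • Z) hE
  simp only [smul_add, smul_smul, smul_zero] at hE2
  rw [show S.ζ ^ b * S.ζ ^ (2 * S.n - b) = 1 by
      rw [← pow_add, show b + (2 * S.n - b) = S.n + S.n by omega, pow_add,
        S.zeta_pow_n, one_mul],
    show S.ζ ^ b * S.ζ ^ (a + (2 * S.n - b)) = S.ζ ^ a by
      rw [← pow_add, show b + (a + (2 * S.n - b)) = a + (S.n + S.n) by omega, pow_add,
        pow_add, S.zeta_pow_n, mul_one, mul_one],
    one_smul] at hE2
  have hmod : S.KK (b + (S.n - a)) = S.KK ((b + (S.n - a)) % S.n) := S.KK_mod _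
  rw [hmod] at hE2
  have := eq_neg_of_add_eq_zero_left hE2
  rw [this, neg_smul]

lemma tK_eq_R2 (a b : ℕ) (ha : a < S.n) (hb : b < S.n) :
    S.tK (b + (S.n - a)) = S.ζ ^ (b + (S.n - a)) • S.KK (a + (S.n - b)) := by
  have h := S.tK_KK (b + (S.n - a)) (a + (S.n - b))
  rw [show b + (S.n - a) + (a + (S.n - b)) = 2 * S.n by omega, KK_two_n] at h
  exact h

/-- relation R2 : [K_a^{13}, K_b^{23}] = ζ^{b-a} [K_{a-b}^{12}, K_a^{13}] -/
lemma R2 (a b : ℕ) (ha : a < S.n) (hb : b < S.n) :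
    sbr3 S.par (emb13 (S.KK a)) (emb23 (S.KK b))
      = (S.ζ ^ (b + (S.n - a))) • sbr3 S.par
          (emb12 (S.KK ((a + (S.n - b)) % S.n))) (emb13 (S.KK a)) := by
  have hE := S.E2 a (b + (S.n - a))
  rw [show a + (b + (S.n - a)) = b + S.n by omega, KK_add_n] at hE
  rw [S.tK_eq_R2 a b ha hb, emb12_smul, sbr3_add_right, sbr3_smul_right] at hE
  have hmod : S.KK (a + (S.n - b)) = S.KK ((a + (S.n - b)) % S.n) := S.KK_mod _
  rw [hmod] at hE
  have h2 := eq_neg_of_add_eq_zero_right hE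
  rw [h2]
  have hanti : sbr3 S.par (emb13 (S.KK a)) (emb12 (S.KK ((a + (S.n - b)) % S.n)))
      = - sbr3 S.par (emb12 (S.KK ((a + (S.n - b)) % S.n))) (emb13 (S.KK a)) :=
    sbr3_antisymm S.par
      (oddPart3_of_Ev3 S.par (Ev3_emb13 S.par (S.Ev2_KK a)))
      (oddPart3_of_Ev3 S.par (Ev3_emb12 S.par (S.Ev2_KK _)))
  rw [hanti, smul_neg, neg_neg]

end Setup
end CYBEaux

open CYBEaux in
/-- The classical Yang–Baxter equation for the twisted rational function
`r(u,v) = Σ_{m ∈ ℤ/n} (id ⊗ ω^m)(K)/(u - ζ^m v)`: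
`[r₁₂(u,v), r₁₃(u,w)] + [r₁₂(u,v), r₂₃(v,w)] + [r₁₃(u,w), r₂₃(v,w)] = 0`. -/
theorem rFun_CYBE [Fintype ι] [DecidableEq ι] (par : ι → ℕ)
    (L : Submodule ℂ (Matrix ι ι ℂ))
    (hL_graded : ∀ X ∈ L, epsMat par * X * epsMat par ∈ L)
    (hL_lie : ∀ X ∈ L, ∀ Y ∈ L, sbr par X Y ∈ L)
    (K : Matrix (ι × ι) (ι × ι) ℂ)
    (hK_mem : K ∈ Submodule.span ℂ {Z | ∃ X ∈ L, ∃ Y ∈ L, Z = tmat X Y})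
    (hK_even : ∀ p q : ι × ι, (par p.1 + par p.2 + par q.1 + par q.2) % 2 = 1 → K p q = 0)
    (hK_sym : sFlip par K = K)
    (hK_inv : ∀ X ∈ L, sbr2 par (tmat X 1 + tmat 1 X) K = 0)
    (n : ℕ) (hn : 0 < n)
    (ω : Matrix ι ι ℂ →ₗ[ℂ] Matrix ι ι ℂ)
    (hω_mem : ∀ X ∈ L, ω X ∈ L)
    (hω_bij : ∀ Y ∈ L, ∃ X ∈ L, ω X = Y)
    (hω_lie : ∀ X ∈ L, ∀ Y ∈ L, ω (sbr par X Y) = sbr par (ω X) (ω Y))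
    (hω_par : ∀ X ∈ L, ω (epsMat par * X * epsMat par) = epsMat par * ω X * epsMat par)
    (hω_ord : ∀ X ∈ L, (⇑ω)^[n] X = X)
    (ζ : ℂ) (hζ : IsPrimitiveRoot ζ n)
    (hωK : idT (⇑ω) (tId (⇑ω) K) = ζ • K)
    (u v w : ℂ)
    (huv : ∀ m < n, u ≠ ζ ^ m * v)
    (huw : ∀ m < n, u ≠ ζ ^ m * w)
    (hvw : ∀ m < n, v ≠ ζ ^ m * w) :
    sbr3 par (emb12 (rFun n ζ (⇑ω) K u v)) (emb13 (rFun n ζ (⇑ω) K u w))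
      + sbr3 par (emb12 (rFun n ζ (⇑ω) K u v)) (emb23 (rFun n ζ (⇑ω) K v w))
      + sbr3 par (emb13 (rFun n ζ (⇑ω) K u w)) (emb23 (rFun n ζ (⇑ω) K v w)) = 0 := by

  classical
  set S : Setup ι := ⟨par, L, hL_graded, hL_lie, K, hK_mem, hK_even, hK_sym, hK_inv,
    n, hn, ω, hω_mem, hω_lie, hω_par, hω_ord, ζ, hζ, hωK⟩ with hS
  -- basic scalar facts
  have hζn : ζ ^ n = 1 := hζ.pow_eq_one
  have hζ0 : ζ ≠ 0 := by
    intro h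
    have h2 := hζn
    rw [h, zero_pow (by omega : n ≠ 0)] at h2
    exact one_ne_zero h2.symm
  have hζmod : ∀ m : ℕ, ζ ^ (m % n) = ζ ^ m := by
    intro m
    conv_rhs => rw [← Nat.div_add_mod m n]
    rw [pow_add, pow_mul, hζn, one_pow, one_mul]
  have hαne : ∀ a, a < n → u - ζ ^ a * v ≠ 0 := fun a ha => sub_ne_zero.mpr (huv a ha)
  have hβne : ∀ a, a < n → u - ζ ^ a * w ≠ 0 := fun a ha => sub_ne_zero.mpr (huw a ha)
  have hγne : ∀ a, a < n → v - ζ ^ a * w ≠ 0 := fun a ha => sub_ne_zero.mpr (hvw a ha)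
  have hηne : ∀ a b, a < n → b < n → ζ ^ a * v - ζ ^ b * w ≠ 0 := by
    intro a b ha hb h
    apply hvw ((b + (n - a)) % n) (Nat.mod_lt _ hn)
    have h0 : ζ ^ a * v = ζ ^ b * w := by linear_combination h
    have h2 : ζ ^ (n - a) * (ζ ^ a * v) = ζ ^ (n - a) * (ζ ^ b * w) := by rw [h0]
    rw [← mul_assoc, ← pow_add, show n - a + a = n by omega, hζn, one_mul,
      ← mul_assoc, ← pow_add] at h2
    rw [h2, hζmod]
    congr 2
    omega
  -- scalar lemma 1
  have sc1 : ∀ a b, a < n → b < n →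
      (ζ ^ a * v - ζ ^ ((b + a) % n) * w)⁻¹ * ζ ^ a = (v - ζ ^ b * w)⁻¹ := by
    intro a b ha hb
    have h3 : ζ ^ ((b + a) % n) = ζ ^ b * ζ ^ a := by rw [hζmod, pow_add]
    rw [h3, show ζ ^ a * v - ζ ^ b * ζ ^ a * w = ζ ^ a * (v - ζ ^ b * w) by ring, mul_inv,
      mul_comm ((ζ ^ a)⁻¹) _, mul_assoc, inv_mul_cancel₀ (pow_ne_zero a hζ0), mul_one]
  -- scalar lemma 2
  have sc2 : ∀ a d, a < n → d < n →
      (v - ζ ^ ((a + n - d) % n) * w)⁻¹ * ζ ^ (((a + n - d) % n) + (n - a))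
        = (ζ ^ d * v - ζ ^ a * w)⁻¹ := by
    intro a d ha hd
    rw [show a + n - d = a + (n - d) by omega]
    set e := (a + (n - d)) % n with hedef
    have helt : e < n := Nat.mod_lt _ hn
    have he : (e + d) % n = a := mod_lemma1 hn hd ha
    have h1 : ζ ^ (e + (n - a)) * ζ ^ d = 1 := by
      rw [← pow_add, show e + (n - a) + d = (e + d) + (n - a) by ring, pow_add,
        ← hζmod (e + d), he, ← pow_add, show a + (n - a) = n by omega, hζn]
    have h2 : ζ ^ (e + (n - a)) * ζ ^ a = ζ ^ e := by
      rw [← pow_add, show e + (n - a) + a = e + n by omega, pow_add, hζn, mul_one]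
    have hne1 : v - ζ ^ e * w ≠ 0 := hγne e helt
    have hne2 : ζ ^ d * v - ζ ^ a * w ≠ 0 := hηne d a hd ha
    have key : ζ ^ (e + (n - a)) * (ζ ^ d * v - ζ ^ a * w) = v - ζ ^ e * w := by
      linear_combination v * h1 - w * h2
    rw [← key, _root_.mul_inv_rev, mul_assoc, inv_mul_cancel₀ (pow_ne_zero _ hζ0), mul_one]
  -- partial fractions
  have PF : ∀ a b, a < n → b < n →
      (u - ζ ^ a * v)⁻¹ * (u - ζ ^ b * w)⁻¹
        = (u - ζ ^ a * v)⁻¹ * (ζ ^ a * v - ζ ^ b * w)⁻¹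
          - (u - ζ ^ b * w)⁻¹ * (ζ ^ a * v - ζ ^ b * w)⁻¹ := by
    intro a b ha hb
    have h1 := hαne a ha
    have h2 := hβne b hb
    have h3 := hηne a b ha hb
    field_simp
    ring
  -- defeq-transported relation lemmas
  have hR1 : ∀ a b, a < n → b < n →
      sbr3 par (emb12 (S.KK a)) (emb13 (S.KK b))
        = (-(ζ ^ a)) • sbr3 par (emb12 (S.KK a))
            (emb23 (S.KK ((b + (n - a)) % n))) := fun a b ha hb => S.R1 a b ha hb
  have hR2 : ∀ a b, a < n → b < n →
      sbr3 par (emb13 (S.KK a)) (emb23 (S.KK b))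
        = (ζ ^ (b + (n - a))) • sbr3 par
            (emb12 (S.KK ((a + (n - b)) % n))) (emb13 (S.KK a)) :=
    fun a b ha hb => S.R2 a b ha hb
  -- expansion of the three brackets
  have e12 : emb12 (rFun n ζ (⇑ω) K u v)
      = ∑ a ∈ Finset.range n, (u - ζ ^ a * v)⁻¹ • emb12 (S.KK a) := by
    rw [show rFun n ζ (⇑ω) K u v
        = ∑ m ∈ Finset.range n, (u - ζ ^ m * v)⁻¹ • S.KK m from rfl, emb12_sum]
    exact Finset.sum_congr rfl fun a _ => emb12_smul _ _
  have e13 : emb13 (rFun n ζ (⇑ω) K u w)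
      = ∑ a ∈ Finset.range n, (u - ζ ^ a * w)⁻¹ • emb13 (S.KK a) := by
    rw [show rFun n ζ (⇑ω) K u w
        = ∑ m ∈ Finset.range n, (u - ζ ^ m * w)⁻¹ • S.KK m from rfl, emb13_sum]
    exact Finset.sum_congr rfl fun a _ => emb13_smul _ _
  have e23 : emb23 (rFun n ζ (⇑ω) K v w)
      = ∑ a ∈ Finset.range n, (v - ζ ^ a * w)⁻¹ • emb23 (S.KK a) := by
    rw [show rFun n ζ (⇑ω) K v w
        = ∑ m ∈ Finset.range n, (v - ζ ^ m * w)⁻¹ • S.KK m from rfl, emb23_sum]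
    exact Finset.sum_congr rfl fun a _ => emb23_smul _ _
  have hb1 : sbr3 par (∑ a ∈ Finset.range n, (u - ζ ^ a * v)⁻¹ • emb12 (S.KK a))
      (∑ b ∈ Finset.range n, (u - ζ ^ b * w)⁻¹ • emb13 (S.KK b))
      = ∑ a ∈ Finset.range n, ∑ b ∈ Finset.range n,
        ((u - ζ ^ a * v)⁻¹ * (u - ζ ^ b * w)⁻¹)
          • sbr3 par (emb12 (S.KK a)) (emb13 (S.KK b)) := by
    rw [sbr3_sum_left]
    refine Finset.sum_congr rfl fun a _ => ?_
    rw [sbr3_sum_right]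
    refine Finset.sum_congr rfl fun b _ => ?_
    rw [sbr3_smul_left, sbr3_smul_right, smul_smul]
  have hb2 : sbr3 par (∑ a ∈ Finset.range n, (u - ζ ^ a * v)⁻¹ • emb12 (S.KK a))
      (∑ b ∈ Finset.range n, (v - ζ ^ b * w)⁻¹ • emb23 (S.KK b))
      = ∑ a ∈ Finset.range n, ∑ b ∈ Finset.range n,
        ((u - ζ ^ a * v)⁻¹ * (v - ζ ^ b * w)⁻¹)
          • sbr3 par (emb12 (S.KK a)) (emb23 (S.KK b)) := by
    rw [sbr3_sum_left]
    refine Finset.sum_congr rfl fun a _ => ?_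
    rw [sbr3_sum_right]
    refine Finset.sum_congr rfl fun b _ => ?_
    rw [sbr3_smul_left, sbr3_smul_right, smul_smul]
  have hb3 : sbr3 par (∑ a ∈ Finset.range n, (u - ζ ^ a * w)⁻¹ • emb13 (S.KK a))
      (∑ b ∈ Finset.range n, (v - ζ ^ b * w)⁻¹ • emb23 (S.KK b))
      = ∑ a ∈ Finset.range n, ∑ b ∈ Finset.range n,
        ((u - ζ ^ a * w)⁻¹ * (v - ζ ^ b * w)⁻¹)
          • sbr3 par (emb13 (S.KK a)) (emb23 (S.KK b)) := by
    rw [sbr3_sum_left]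
    refine Finset.sum_congr rfl fun a _ => ?_
    rw [sbr3_sum_right]
    refine Finset.sum_congr rfl fun b _ => ?_
    rw [sbr3_smul_left, sbr3_smul_right, smul_smul]
  rw [e12, e13, e23, hb1, hb2, hb3]
  -- PA : residue cancellation at u = ζ^a v
  have PA : ∀ a, a < n →
      (∑ b ∈ Finset.range n, (ζ ^ a * v - ζ ^ b * w)⁻¹
          • sbr3 par (emb12 (S.KK a)) (emb13 (S.KK b)))
        + ∑ b ∈ Finset.range n, (v - ζ ^ b * w)⁻¹
            • sbr3 par (emb12 (S.KK a)) (emb23 (S.KK b)) = 0 := by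
    intro a ha
    have hstep : (∑ b ∈ Finset.range n, (ζ ^ a * v - ζ ^ b * w)⁻¹
        • sbr3 par (emb12 (S.KK a)) (emb13 (S.KK b)))
        = ∑ b ∈ Finset.range n, (-((v - ζ ^ b * w)⁻¹))
            • sbr3 par (emb12 (S.KK a)) (emb23 (S.KK b)) := by
      calc ∑ b ∈ Finset.range n, (ζ ^ a * v - ζ ^ b * w)⁻¹
          • sbr3 par (emb12 (S.KK a)) (emb13 (S.KK b))
          = ∑ b ∈ Finset.range n, (fun x : ℕ =>
              (-((ζ ^ a * v - ζ ^ ((x + a) % n) * w)⁻¹ * ζ ^ a))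
                • sbr3 par (emb12 (S.KK a)) (emb23 (S.KK (x % n))))
              ((b + (n - a)) % n) := by
            refine Finset.sum_congr rfl fun b hb => ?_
            have hb' := Finset.mem_range.mp hb
            simp only []
            rw [mod_lemma1 hn ha hb',
              Nat.mod_eq_of_lt (Nat.mod_lt _ hn : (b + (n - a)) % n < n),
              hR1 a b ha hb', smul_smul]
            congr 1
            ring
        _ = ∑ b ∈ Finset.range n, (fun x : ℕ =>
              (-((ζ ^ a * v - ζ ^ ((x + a) % n) * w)⁻¹ * ζ ^ a))
                • sbr3 par (emb12 (S.KK a)) (emb23 (S.KK (x % n)))) (b % n) :=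
            sum_mod_shift n (fun x : ℕ =>
              (-((ζ ^ a * v - ζ ^ ((x + a) % n) * w)⁻¹ * ζ ^ a))
                • sbr3 par (emb12 (S.KK a)) (emb23 (S.KK (x % n)))) (n - a)
        _ = ∑ b ∈ Finset.range n, (-((v - ζ ^ b * w)⁻¹))
              • sbr3 par (emb12 (S.KK a)) (emb23 (S.KK b)) := by
            refine Finset.sum_congr rfl fun b hb => ?_
            have hb' := Finset.mem_range.mp hb
            simp only [Nat.mod_eq_of_lt hb']
            rw [sc1 a b ha hb']
    rw [hstep, ← Finset.sum_add_distrib]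
    refine Finset.sum_eq_zero fun b _ => ?_
    rw [neg_smul, neg_add_cancel]
  -- QB : residue cancellation at u = ζ^a w
  have QB : ∀ a, a < n →
      (∑ d ∈ Finset.range n, (-((ζ ^ d * v - ζ ^ a * w)⁻¹))
          • sbr3 par (emb12 (S.KK d)) (emb13 (S.KK a)))
        + ∑ b ∈ Finset.range n, (v - ζ ^ b * w)⁻¹
            • sbr3 par (emb13 (S.KK a)) (emb23 (S.KK b)) = 0 := by
    intro a ha
    have hstep : (∑ b ∈ Finset.range n, (v - ζ ^ b * w)⁻¹
        • sbr3 par (emb13 (S.KK a)) (emb23 (S.KK b)))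
        = ∑ d ∈ Finset.range n, (ζ ^ d * v - ζ ^ a * w)⁻¹
            • sbr3 par (emb12 (S.KK d)) (emb13 (S.KK a)) := by
      calc ∑ b ∈ Finset.range n, (v - ζ ^ b * w)⁻¹
          • sbr3 par (emb13 (S.KK a)) (emb23 (S.KK b))
          = ∑ b ∈ Finset.range n, (fun x : ℕ =>
              ((v - ζ ^ ((a + n - (x % n)) % n) * w)⁻¹
                  * ζ ^ (((a + n - (x % n)) % n) + (n - a)))
                • sbr3 par (emb12 (S.KK (x % n))) (emb13 (S.KK a)))
              ((a + n - b) % n) := by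
            refine Finset.sum_congr rfl fun b hb => ?_
            have hb' := Finset.mem_range.mp hb
            simp only []
            rw [Nat.mod_eq_of_lt (Nat.mod_lt _ hn : (a + n - b) % n < n),
              mod_lemma2 hn ha hb',
              show a + n - b = a + (n - b) by omega,
              hR2 a b ha hb', smul_smul]
        _ = ∑ b ∈ Finset.range n, (fun x : ℕ =>
              ((v - ζ ^ ((a + n - (x % n)) % n) * w)⁻¹
                  * ζ ^ (((a + n - (x % n)) % n) + (n - a)))
                • sbr3 par (emb12 (S.KK (x % n))) (emb13 (S.KK a))) (b % n) :=
            sum_reflect_mod n (fun x : ℕ =>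
              ((v - ζ ^ ((a + n - (x % n)) % n) * w)⁻¹
                  * ζ ^ (((a + n - (x % n)) % n) + (n - a)))
                • sbr3 par (emb12 (S.KK (x % n))) (emb13 (S.KK a))) a
        _ = ∑ d ∈ Finset.range n, (ζ ^ d * v - ζ ^ a * w)⁻¹
              • sbr3 par (emb12 (S.KK d)) (emb13 (S.KK a)) := by
            refine Finset.sum_congr rfl fun d hd => ?_
            have hd' := Finset.mem_range.mp hd
            simp only [Nat.mod_eq_of_lt hd']
            rw [sc2 a d ha hd']
    rw [hstep, ← Finset.sum_add_distrib]
    refine Finset.sum_eq_zero fun d _ => ?_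
    rw [neg_smul, neg_add_cancel]
  -- split the first double sum using partial fractions
  have hT1 : (∑ a ∈ Finset.range n, ∑ b ∈ Finset.range n,
      ((u - ζ ^ a * v)⁻¹ * (u - ζ ^ b * w)⁻¹)
        • sbr3 par (emb12 (S.KK a)) (emb13 (S.KK b)))
      = (∑ a ∈ Finset.range n, ∑ b ∈ Finset.range n,
          ((u - ζ ^ a * v)⁻¹ * (ζ ^ a * v - ζ ^ b * w)⁻¹)
            • sbr3 par (emb12 (S.KK a)) (emb13 (S.KK b)))
        + ∑ a ∈ Finset.range n, ∑ b ∈ Finset.range n,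
          (-((u - ζ ^ b * w)⁻¹ * (ζ ^ a * v - ζ ^ b * w)⁻¹))
            • sbr3 par (emb12 (S.KK a)) (emb13 (S.KK b)) := by
    rw [← Finset.sum_add_distrib]
    refine Finset.sum_congr rfl fun a ha => ?_
    rw [← Finset.sum_add_distrib]
    refine Finset.sum_congr rfl fun b hb => ?_
    rw [← add_smul]
    congr 1
    rw [PF a b (Finset.mem_range.mp ha) (Finset.mem_range.mp hb)]
    ring
  rw [hT1]
  -- group 1 vanishes by PA
  have grp1 : (∑ a ∈ Finset.range n, ∑ b ∈ Finset.range n,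
      ((u - ζ ^ a * v)⁻¹ * (ζ ^ a * v - ζ ^ b * w)⁻¹)
        • sbr3 par (emb12 (S.KK a)) (emb13 (S.KK b)))
      + (∑ a ∈ Finset.range n, ∑ b ∈ Finset.range n,
          ((u - ζ ^ a * v)⁻¹ * (v - ζ ^ b * w)⁻¹)
            • sbr3 par (emb12 (S.KK a)) (emb23 (S.KK b))) = 0 := by
    rw [← Finset.sum_add_distrib]
    refine Finset.sum_eq_zero fun a ha => ?_
    have ha' := Finset.mem_range.mp ha
    have h1 : (∑ b ∈ Finset.range n,
        ((u - ζ ^ a * v)⁻¹ * (ζ ^ a * v - ζ ^ b * w)⁻¹)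
          • sbr3 par (emb12 (S.KK a)) (emb13 (S.KK b)))
        = (u - ζ ^ a * v)⁻¹ • ∑ b ∈ Finset.range n,
            (ζ ^ a * v - ζ ^ b * w)⁻¹ • sbr3 par (emb12 (S.KK a)) (emb13 (S.KK b)) := by
      rw [Finset.smul_sum]
      exact Finset.sum_congr rfl fun b _ => by rw [smul_smul]
    have h2 : (∑ b ∈ Finset.range n,
        ((u - ζ ^ a * v)⁻¹ * (v - ζ ^ b * w)⁻¹)
          • sbr3 par (emb12 (S.KK a)) (emb23 (S.KK b)))
        = (u - ζ ^ a * v)⁻¹ • ∑ b ∈ Finset.range n,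
            (v - ζ ^ b * w)⁻¹ • sbr3 par (emb12 (S.KK a)) (emb23 (S.KK b)) := by
      rw [Finset.smul_sum]
      exact Finset.sum_congr rfl fun b _ => by rw [smul_smul]
    rw [h1, h2, ← smul_add, PA a ha', smul_zero]
  -- group 2 vanishes by QB
  have grp2 : (∑ a ∈ Finset.range n, ∑ b ∈ Finset.range n,
      (-((u - ζ ^ b * w)⁻¹ * (ζ ^ a * v - ζ ^ b * w)⁻¹))
        • sbr3 par (emb12 (S.KK a)) (emb13 (S.KK b)))
      + (∑ a ∈ Finset.range n, ∑ b ∈ Finset.range n,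
          ((u - ζ ^ a * w)⁻¹ * (v - ζ ^ b * w)⁻¹)
            • sbr3 par (emb13 (S.KK a)) (emb23 (S.KK b))) = 0 := by
    rw [Finset.sum_comm, ← Finset.sum_add_distrib]
    refine Finset.sum_eq_zero fun a ha => ?_
    have ha' := Finset.mem_range.mp ha
    have h1 : (∑ d ∈ Finset.range n,
        (-((u - ζ ^ a * w)⁻¹ * (ζ ^ d * v - ζ ^ a * w)⁻¹))
          • sbr3 par (emb12 (S.KK d)) (emb13 (S.KK a)))
        = (u - ζ ^ a * w)⁻¹ • ∑ d ∈ Finset.range n,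
            (-((ζ ^ d * v - ζ ^ a * w)⁻¹))
              • sbr3 par (emb12 (S.KK d)) (emb13 (S.KK a)) := by
      rw [Finset.smul_sum]
      refine Finset.sum_congr rfl fun d _ => by rw [smul_smul]; congr 1; ring
    have h2 : (∑ b ∈ Finset.range n,
        ((u - ζ ^ a * w)⁻¹ * (v - ζ ^ b * w)⁻¹)
          • sbr3 par (emb13 (S.KK a)) (emb23 (S.KK b)))
        = (u - ζ ^ a * w)⁻¹ • ∑ b ∈ Finset.range n,
            (v - ζ ^ b * w)⁻¹ • sbr3 par (emb13 (S.KK a)) (emb23 (S.KK b)) := by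
      rw [Finset.smul_sum]
      exact Finset.sum_congr rfl fun b _ => by rw [smul_smul]
    rw [h1, h2, ← smul_add, QB a ha', smul_zero]
  calc (∑ a ∈ Finset.range n, ∑ b ∈ Finset.range n,
      ((u - ζ ^ a * v)⁻¹ * (ζ ^ a * v - ζ ^ b * w)⁻¹)
        • sbr3 par (emb12 (S.KK a)) (emb13 (S.KK b)))
      + (∑ a ∈ Finset.range n, ∑ b ∈ Finset.range n,
          (-((u - ζ ^ b * w)⁻¹ * (ζ ^ a * v - ζ ^ b * w)⁻¹))
            • sbr3 par (emb12 (S.KK a)) (emb13 (S.KK b)))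
      + (∑ a ∈ Finset.range n, ∑ b ∈ Finset.range n,
          ((u - ζ ^ a * v)⁻¹ * (v - ζ ^ b * w)⁻¹)
            • sbr3 par (emb12 (S.KK a)) (emb23 (S.KK b)))
      + ∑ a ∈ Finset.range n, ∑ b ∈ Finset.range n,
          ((u - ζ ^ a * w)⁻¹ * (v - ζ ^ b * w)⁻¹)
            • sbr3 par (emb13 (S.KK a)) (emb23 (S.KK b))
      = ((∑ a ∈ Finset.range n, ∑ b ∈ Finset.range n,
          ((u - ζ ^ a * v)⁻¹ * (ζ ^ a * v - ζ ^ b * w)⁻¹)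
            • sbr3 par (emb12 (S.KK a)) (emb13 (S.KK b)))
        + (∑ a ∈ Finset.range n, ∑ b ∈ Finset.range n,
            ((u - ζ ^ a * v)⁻¹ * (v - ζ ^ b * w)⁻¹)
              • sbr3 par (emb12 (S.KK a)) (emb23 (S.KK b))))
        + ((∑ a ∈ Finset.range n, ∑ b ∈ Finset.range n,
            (-((u - ζ ^ b * w)⁻¹ * (ζ ^ a * v - ζ ^ b * w)⁻¹))
              • sbr3 par (emb12 (S.KK a)) (emb13 (S.KK b)))
          + ∑ a ∈ Finset.range n, ∑ b ∈ Finset.range n,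
              ((u - ζ ^ a * w)⁻¹ * (v - ζ ^ b * w)⁻¹)
                • sbr3 par (emb13 (S.KK a)) (emb23 (S.KK b))) := by abel
    _ = 0 := by rw [grp1, grp2, add_zero]
end
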